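/- arXiv:2107.00071 — 7 statements merged into one kernel-verified Lean document; each statement's English description precedes it below -/
import Mathlib

section
/- For any graph G without isolated vertices on n vertices, the Randić index satisfies R(G) ≤ n/2, with equality if G is regular (every vertex has the same positive degree). -/
open SimpleGraph Finset
open scoped Classical

noncomputable def randic {V : Type*} [Fintype V] (G : SimpleGraph V) : ℝ :=
  ∑ e ∈ G.edgeFinset,
    Sym2.lift ⟨fun u v => 1 / Real.sqrt ((G.degree u : ℝ) * (G.degree v : ℝ)),
      fun u v => by simp [mul_comm]⟩ e

noncomputable def ecc {V : Type*} [Fintype V] (G : SimpleGraph V) (v : V) : ℕ :=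
  univ.sup fun u => G.dist v u

noncomputable def graphRadius {V : Type*} [Fintype V] (G : SimpleGraph V) : ℕ :=
  sInf (Set.range (ecc G))

noncomputable def graphDiam {V : Type*} [Fintype V] (G : SimpleGraph V) : ℕ :=
  univ.sup fun v => ecc G v

/-- A cactus: a connected graph in which no two distinct cycles share an edge. -/
def IsCactus {V : Type*} (G : SimpleGraph V) : Prop :=
  G.Connected ∧ ∀ ⦃u v : V⦄ (c₁ : G.Walk u u) (c₂ : G.Walk v v),
    c₁.IsCycle → c₂.IsCycle → ∀ e ∈ c₁.edges, e ∈ c₂.edges →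
      c₁.edges.toFinset = c₂.edges.toFinset

def IsCutVertex {V : Type*} (G : SimpleGraph V) (v : V) : Prop :=
  G.Connected ∧ ¬ (G.induce {u : V | u ≠ v}).Connected


section Aux
variable {V : Type*} [Fintype V] (G : SimpleGraph V)

lemma dart_sum_edge (F : Sym2 V → ℝ) :
    ∑ d : G.Dart, F d.edge = 2 * ∑ e ∈ G.edgeFinset, F e := by
  classical
  rw [← Finset.sum_fiberwise_of_maps_to (g := SimpleGraph.Dart.edge) (t := G.edgeFinset)
    (fun d _ => by rw [mem_edgeFinset]; exact d.edge_mem)]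
  rw [Finset.mul_sum]
  refine Finset.sum_congr rfl fun e he => ?_
  have hcard : #{d : G.Dart | d.edge = e} = 2 :=
    G.dart_edge_fiber_card e (by rwa [← mem_edgeFinset])
  calc ∑ d ∈ ({d : G.Dart | d.edge = e} : Finset _), F d.edge
      = ∑ d ∈ ({d : G.Dart | d.edge = e} : Finset _), F e := by
        refine Finset.sum_congr rfl fun d hd => ?_
        rw [Finset.mem_filter] at hd
        rw [hd.2]
    _ = 2 * F e := by rw [Finset.sum_const, hcard]; simp [two_mul]

lemma dart_sum_fst (f : V → ℝ) :
    ∑ d : G.Dart, f d.fst = ∑ v : V, (G.degree v : ℝ) * f v := by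
  classical
  rw [← Finset.sum_fiberwise_of_maps_to (g := fun d : G.Dart => d.fst) (t := Finset.univ)
    (fun d _ => Finset.mem_univ _)]
  refine Finset.sum_congr rfl fun v _ => ?_
  calc ∑ d ∈ ({d : G.Dart | d.fst = v} : Finset _), f d.fst
      = ∑ d ∈ ({d : G.Dart | d.fst = v} : Finset _), f v := by
        refine Finset.sum_congr rfl fun d hd => ?_
        rw [Finset.mem_filter] at hd
        rw [hd.2]
    _ = (G.degree v : ℝ) * f v := by
        rw [Finset.sum_const, G.dart_fst_fiber_card_eq_degree]
        simp [nsmul_eq_mul]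

lemma dart_sum_snd (f : V → ℝ) :
    ∑ d : G.Dart, f d.snd = ∑ d : G.Dart, f d.fst := by
  exact Fintype.sum_bijective SimpleGraph.Dart.symm
    (SimpleGraph.Dart.symm_involutive.bijective) _ _ (fun d => rfl)

lemma sqrt_am_gm {x y : ℝ} (hx : 0 < x) (hy : 0 < y) :
    1 / Real.sqrt (x * y) ≤ 1 / (2 * x) + 1 / (2 * y) := by
  have hs : Real.sqrt (x * y) = Real.sqrt x * Real.sqrt y := Real.sqrt_mul hx.le y
  have hxs : 0 < Real.sqrt x := Real.sqrt_pos.2 hx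
  have hys : 0 < Real.sqrt y := Real.sqrt_pos.2 hy
  have hx2 : Real.sqrt x ^ 2 = x := Real.sq_sqrt hx.le
  have hy2 : Real.sqrt y ^ 2 = y := Real.sq_sqrt hy.le
  rw [hs, div_add_div _ _ (by positivity) (by positivity), div_le_div_iff₀ (by positivity) (by positivity)]
  nlinarith [sq_nonneg (Real.sqrt x - Real.sqrt y), mul_pos hxs hys, sq_nonneg (x - y)]

end Aux

theorem randic_le_half_card {V : Type*} [Fintype V] (G : SimpleGraph V)
    (h : ∀ v : V, 0 < G.degree v) :
    randic G ≤ (Fintype.card V : ℝ) / 2 ∧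
    (∀ d : ℕ, 0 < d → G.IsRegularOfDegree d → randic G = (Fintype.card V : ℝ) / 2) := by
  classical
  set F : Sym2 V → ℝ := Sym2.lift ⟨fun u v => 1 / Real.sqrt ((G.degree u : ℝ) * (G.degree v : ℝ)),
      fun u v => by simp [mul_comm]⟩ with hF
  have hrandic : randic G = ∑ e ∈ G.edgeFinset, F e := rfl
  have hdart : ∀ d : G.Dart, F d.edge
      = 1 / Real.sqrt ((G.degree d.fst : ℝ) * (G.degree d.snd : ℝ)) := by
    intro d
    have : d.edge = s(d.fst, d.snd) := rfl
    rw [this, hF, Sym2.lift_mk]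
  constructor
  · have h2 : 2 * randic G ≤ (Fintype.card V : ℝ) := by
      rw [hrandic, ← dart_sum_edge]
      have step1 : ∑ d : G.Dart, F d.edge
          ≤ ∑ d : G.Dart, (1 / (2 * (G.degree d.fst : ℝ)) + 1 / (2 * (G.degree d.snd : ℝ))) := by
        refine Finset.sum_le_sum fun d _ => ?_
        rw [hdart d]
        exact sqrt_am_gm (by exact_mod_cast h d.fst) (by exact_mod_cast h d.snd)
      refine step1.trans ?_
      rw [Finset.sum_add_distrib, dart_sum_snd G (fun v => 1 / (2 * (G.degree v : ℝ))),
        dart_sum_fst G (fun v => 1 / (2 * (G.degree v : ℝ)))]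
      have hv : ∀ v : V, (G.degree v : ℝ) * (1 / (2 * (G.degree v : ℝ))) = 1 / 2 := by
        intro v
        have : (G.degree v : ℝ) ≠ 0 := by exact_mod_cast (h v).ne'
        field_simp
      rw [Finset.sum_congr rfl fun v _ => hv v]
      simp [Finset.sum_const, Finset.card_univ]
      ring_nf
      rfl
    linarith
  · intro d hd hreg
    have hterm : ∀ e ∈ G.edgeFinset, F e = 1 / (d : ℝ) := by
      intro e he
      induction e with
      | h u v =>
        rw [hF, Sym2.lift_mk]
        dsimp only
        rw [hreg u, hreg v, Real.sqrt_mul_self (by positivity)]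
    have hsum : randic G = (#G.edgeFinset : ℝ) * (1 / (d : ℝ)) := by
      rw [hrandic, Finset.sum_congr rfl hterm, Finset.sum_const]
      simp
    have hcount : Fintype.card V * d = 2 * #G.edgeFinset := by
      rw [← G.sum_degrees_eq_twice_card_edges]
      simp [hreg _, Finset.sum_const, Finset.card_univ, mul_comm]
    have hcountR : (Fintype.card V : ℝ) * d = 2 * (#G.edgeFinset : ℝ) := by
      exact_mod_cast hcount
    have hd' : (d : ℝ) ≠ 0 := by exact_mod_cast hd.ne'
    have hE : (#G.edgeFinset : ℝ) = (Fintype.card V : ℝ) * d / 2 := by linarith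
    rw [hsum, hE]
    field_simp
end

section
/- Let G be a graph, v a vertex of G, and form G+l by attaching a new pendant vertex adjacent to v. Then R(G+l) - R(G) ≥ √(d_v+1) - √(d_v), with equality if and only if every neighbor of v in G is a leaf. -/
open SimpleGraph Finset
open scoped Classical

/-- Attach a new pendant vertex (the vertex `none`) adjacent to `v`. -/
def addPendant {V : Type*} (G : SimpleGraph V) (v : V) : SimpleGraph (Option V) :=
  SimpleGraph.fromRel fun a b =>
    (∃ x y, a = some x ∧ b = some y ∧ G.Adj x y) ∨ (a = none ∧ b = some v)


section Aux
variable {V : Type*} (G : SimpleGraph V) (v : V)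

@[simp] lemma addPendant_adj_some_some (u w : V) :
    (addPendant G v).Adj (some u) (some w) ↔ G.Adj u w := by
  constructor
  · rintro ⟨hne, h | h⟩ <;> rcases h with ⟨x, y, hx, hy, h⟩ | ⟨h, -⟩ <;>
      simp_all <;> exact h.symm
  · intro h
    exact ⟨by simpa using h.ne, Or.inl (Or.inl ⟨u, w, rfl, rfl, h⟩)⟩

@[simp] lemma addPendant_adj_none_some (u : V) :
    (addPendant G v).Adj none (some u) ↔ u = v := by
  constructor
  · rintro ⟨hne, h | h⟩ <;> rcases h with ⟨x, y, hx, hy, h⟩ | ⟨h1, h2⟩ <;> simp_all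
  · rintro rfl
    exact ⟨by simp, Or.inl (Or.inr ⟨rfl, rfl⟩)⟩

@[simp] lemma addPendant_adj_some_none (u : V) :
    (addPendant G v).Adj (some u) none ↔ u = v := by
  rw [SimpleGraph.adj_comm]; exact addPendant_adj_none_some G v u

@[simp] lemma addPendant_adj_none_none :
    ¬ (addPendant G v).Adj none none := SimpleGraph.irrefl _

variable [Fintype V]

lemma addPendant_neighborFinset_none :
    (addPendant G v).neighborFinset none = {some v} := by
  ext a
  cases a <;> simp [SimpleGraph.mem_neighborFinset]

lemma addPendant_neighborFinset_some (u : V) :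
    (addPendant G v).neighborFinset (some u) =
      (G.neighborFinset u).map ⟨some, Option.some_injective V⟩ ∪
        (if u = v then {none} else ∅) := by
  ext a
  by_cases h : u = v <;> cases a <;>
    simp [SimpleGraph.mem_neighborFinset, h, eq_comm (a := v) (b := u)]

lemma addPendant_degree_none : (addPendant G v).degree none = 1 := by
  rw [SimpleGraph.degree, addPendant_neighborFinset_none]; simp

lemma addPendant_degree_some (u : V) :
    (addPendant G v).degree (some u) = G.degree u + (if u = v then 1 else 0) := by
  rw [SimpleGraph.degree, addPendant_neighborFinset_some]
  rw [Finset.card_union_of_disjoint, Finset.card_map]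
  · congr 1
    split <;> simp
  · split <;> simp

lemma addPendant_edgeFinset :
    (addPendant G v).edgeFinset =
      insert s(none, some v)
        (G.edgeFinset.map ⟨Sym2.map some, Sym2.map.injective (Option.some_injective V)⟩) := by
  ext e
  induction e with
  | _ a b =>
    simp only [SimpleGraph.mem_edgeFinset, SimpleGraph.mem_edgeSet, Finset.mem_insert,
      Finset.mem_map, Function.Embedding.coeFn_mk]
    constructor
    · match a, b with
      | some u, some w => exact fun h => Or.inr ⟨s(u, w), by simpa using h, rfl⟩
      | none, some u => intro h; simp only [addPendant_adj_none_some] at h; subst h; left; rfl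
      | some u, none =>
        intro h; simp only [addPendant_adj_some_none] at h; subst h; left; exact Sym2.eq_swap
      | none, none => intro h; exact absurd h (addPendant_adj_none_none G v)
    · rintro (h | ⟨e', he', heq⟩)
      · rw [← SimpleGraph.mem_edgeSet, h]
        simp [SimpleGraph.mem_edgeSet]
      · rw [← SimpleGraph.mem_edgeSet, ← heq]
        induction e' with
        | _ x y =>
          simp only [Sym2.map_pair_eq, SimpleGraph.mem_edgeSet, addPendant_adj_some_some]
          simpa using he'

lemma sqrt_identity (d : ℝ) :
    1 / Real.sqrt (d + 1) + d * (1 / Real.sqrt (d + 1) - 1 / Real.sqrt d)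
      = Real.sqrt (d + 1) - Real.sqrt d := by
  rw [show Real.sqrt (d+1) - Real.sqrt d = (d+1)/Real.sqrt (d+1) - d/Real.sqrt d by
    rw [Real.div_sqrt, Real.div_sqrt]]
  ring

end Aux

section Main
variable {V : Type*} [Fintype V] (G : SimpleGraph V) (v : V)

noncomputable def newWt : Sym2 V → ℝ :=
  Sym2.lift ⟨fun u w => 1 / Real.sqrt
      (((G.degree u : ℝ) + if u = v then 1 else 0) *
        ((G.degree w : ℝ) + if w = v then 1 else 0)),
    fun u w => by simp [mul_comm]⟩

noncomputable def oldWt : Sym2 V → ℝ :=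
  Sym2.lift ⟨fun u w => 1 / Real.sqrt ((G.degree u : ℝ) * (G.degree w : ℝ)),
    fun u w => by simp [mul_comm]⟩

lemma randic_eq_sum_oldWt : randic G = ∑ e ∈ G.edgeFinset, oldWt G e := rfl

lemma randic_addPendant_eq :
    randic (addPendant G v) =
      1 / Real.sqrt ((G.degree v : ℝ) + 1) + ∑ e ∈ G.edgeFinset, newWt G v e := by
  rw [randic, addPendant_edgeFinset, Finset.sum_insert, Finset.sum_map]
  · congr 1
    · simp [Sym2.lift_mk, addPendant_degree_none, addPendant_degree_some]
    · refine Finset.sum_congr rfl fun e _ => ?_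
      induction e with
      | _ x y =>
        simp only [Function.Embedding.coeFn_mk, Sym2.map_pair_eq, Sym2.lift_mk,
          addPendant_degree_some, newWt]
        push_cast [apply_ite (fun n : ℕ => (n : ℝ))]
        ring_nf
  · rw [Finset.mem_map]
    rintro ⟨e', he', heq⟩
    induction e' with
    | _ x y =>
      simp [Sym2.map_pair_eq, Sym2.eq_iff] at heq

lemma diff_eq_zero (e : Sym2 V) (hv : v ∉ e) : newWt G v e - oldWt G e = 0 := by
  induction e with
  | _ x y =>
    rw [Sym2.mem_iff] at hv
    push_neg at hv
    simp [newWt, oldWt, Ne.symm hv.1, Ne.symm hv.2]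

lemma filter_eq_image :
    {e ∈ G.edgeFinset | v ∈ e} = (G.neighborFinset v).image (fun w => s(v, w)) := by
  ext e
  induction e with
  | _ x y =>
    simp only [Finset.mem_filter, Finset.mem_image, SimpleGraph.mem_edgeFinset,
      SimpleGraph.mem_edgeSet, SimpleGraph.mem_neighborFinset, Sym2.mem_iff]
    constructor
    · rintro ⟨hadj, rfl | rfl⟩
      · exact ⟨y, hadj, rfl⟩
      · exact ⟨x, hadj.symm, Sym2.eq_swap⟩
    · rintro ⟨w, hadj, heq⟩
      rw [Sym2.eq_iff] at heq
      rcases heq with ⟨rfl, rfl⟩ | ⟨rfl, rfl⟩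
      · exact ⟨hadj, Or.inl rfl⟩
      · exact ⟨hadj.symm, Or.inr rfl⟩

lemma key_eq :
    randic (addPendant G v) - randic G =
      1 / Real.sqrt ((G.degree v : ℝ) + 1) +
        ∑ w ∈ G.neighborFinset v,
          (1 / Real.sqrt ((G.degree v : ℝ) + 1) - 1 / Real.sqrt (G.degree v)) *
            (1 / Real.sqrt (G.degree w : ℝ)) := by
  rw [randic_addPendant_eq, randic_eq_sum_oldWt, add_sub_assoc, ← Finset.sum_sub_distrib]
  congr 1
  rw [← Finset.sum_filter_of_ne (p := fun e => v ∈ e)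
    (fun e _ h => by by_contra hv; exact h (diff_eq_zero G v e hv))]
  rw [filter_eq_image]
  rw [Finset.sum_image (fun x _ y _ h => Sym2.congr_right.mp h)]
  refine Finset.sum_congr rfl fun w hw => ?_
  rw [SimpleGraph.mem_neighborFinset] at hw
  have hwv : w ≠ v := fun h => G.irrefl (h ▸ hw)
  simp only [newWt, oldWt, Sym2.lift_mk, hwv, if_true, if_false, add_zero]
  rw [Real.sqrt_mul (by positivity), Real.sqrt_mul (by positivity),
    ← one_div_mul_one_div, ← one_div_mul_one_div, ← sub_mul]

end Main

theorem randic_addPendant' {V : Type*} [Fintype V] (G : SimpleGraph V) (v : V) :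
    randic (addPendant G v) - randic G ≥
      Real.sqrt ((G.degree v : ℝ) + 1) - Real.sqrt (G.degree v) ∧
    (randic (addPendant G v) - randic G =
        Real.sqrt ((G.degree v : ℝ) + 1) - Real.sqrt (G.degree v) ↔
      ∀ w : V, G.Adj v w → G.degree w = 1) := by
  set d : ℝ := (G.degree v : ℝ) with hd
  set c : ℝ := 1 / Real.sqrt (d + 1) - 1 / Real.sqrt d with hc
  have key := key_eq G v
  rw [← hd, ← hc] at key
  have hid : Real.sqrt (d + 1) - Real.sqrt d = 1 / Real.sqrt (d + 1) + d * c :=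
    (sqrt_identity d).symm
  have hconst : ∑ _w ∈ G.neighborFinset v, c = d * c := by
    rw [Finset.sum_const, G.card_neighborFinset_eq_degree, nsmul_eq_mul, hd]
  have hcneg : ∀ w : V, G.Adj v w → c < 0 := by
    intro w hadj
    have hd1 : (1 : ℝ) ≤ d := by
      rw [hd]
      exact_mod_cast (G.degree_pos_iff_exists_adj v).mpr ⟨w, hadj⟩
    have hsd : 0 < Real.sqrt d := Real.sqrt_pos.mpr (by linarith)
    have hlt : Real.sqrt d < Real.sqrt (d + 1) :=
      Real.sqrt_lt_sqrt (by linarith) (by linarith)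
    exact sub_neg.mpr (one_div_lt_one_div_of_lt hsd hlt)
  have hxw : ∀ w : V, G.Adj v w → (1 : ℝ) ≤ Real.sqrt (G.degree w : ℝ) := by
    intro w hadj
    have : (1 : ℝ) ≤ (G.degree w : ℝ) := by
      exact_mod_cast (G.degree_pos_iff_exists_adj w).mpr ⟨v, hadj.symm⟩
    calc (1 : ℝ) = Real.sqrt 1 := Real.sqrt_one.symm
      _ ≤ _ := Real.sqrt_le_sqrt this
  have hper : ∀ w ∈ G.neighborFinset v,
      c ≤ c * (1 / Real.sqrt (G.degree w : ℝ)) := by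
    intro w hw
    rw [SimpleGraph.mem_neighborFinset] at hw
    have hs1 : 1 / Real.sqrt (G.degree w : ℝ) ≤ 1 := by
      rw [div_le_one (by linarith [hxw w hw])]
      exact hxw w hw
    calc c = c * 1 := (mul_one c).symm
      _ ≤ c * (1 / Real.sqrt (G.degree w : ℝ)) :=
        mul_le_mul_of_nonpos_left hs1 (hcneg w hw).le
  have hpereq : ∀ w ∈ G.neighborFinset v,
      (c = c * (1 / Real.sqrt (G.degree w : ℝ)) ↔ G.degree w = 1) := by
    intro w hw
    rw [SimpleGraph.mem_neighborFinset] at hw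
    constructor
    · intro h
      have h2 : c * 1 = c * (1 / Real.sqrt (G.degree w : ℝ)) := by rwa [mul_one]
      have h3 := mul_left_cancel₀ (hcneg w hw).ne h2
      rw [eq_comm, one_div, inv_eq_one, Real.sqrt_eq_one] at h3
      exact_mod_cast h3
    · intro h
      rw [h]
      norm_num
  constructor
  · rw [ge_iff_le, hid, key, ← hconst]
    exact add_le_add le_rfl (Finset.sum_le_sum hper)
  · rw [key, hid, add_right_inj, ← hconst, eq_comm,
      Finset.sum_eq_sum_iff_of_le hper]
    constructor
    · intro h w hw
      have hw' : w ∈ G.neighborFinset v := (SimpleGraph.mem_neighborFinset G v w).mpr hw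
      exact (hpereq w hw').mp (h w hw')
    · intro h w hw
      exact (hpereq w hw).mpr (h w ((SimpleGraph.mem_neighborFinset G v w).mp hw))

theorem randic_addPendant {V : Type*} [Fintype V] (G : SimpleGraph V) (v : V) :
    randic (addPendant G v) - randic G ≥
      Real.sqrt ((G.degree v : ℝ) + 1) - Real.sqrt (G.degree v) ∧
    (randic (addPendant G v) - randic G =
        Real.sqrt ((G.degree v : ℝ) + 1) - Real.sqrt (G.degree v) ↔
      ∀ w : V, G.Adj v w → G.degree w = 1) := randic_addPendant' G v
end

section
/- Let G be a graph and v a vertex all of whose neighbors have degree at least 2. Form G+l by attaching a new pendant vertex at v. Then R(G+l) - R(G) ≥ 1/√(d_v+1) - (d_v/√2)(1/√d_v - 1/√(d_v+1)), which is strictly greater than (√(d_v+1) - √d_v)/√2. -/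
open SimpleGraph Finset
open scoped Classical

section AuxRandic

lemma adj_ss {V : Type*} (G : SimpleGraph V) (v x y : V) :
    (addPendant G v).Adj (some x) (some y) ↔ G.Adj x y := by
  simp only [addPendant, fromRel_adj]
  constructor
  · rintro ⟨hne, h | h⟩
    · rcases h with ⟨a,b,ha,hb,hab⟩|⟨h,_⟩ <;> simp_all
    · rcases h with ⟨a,b,ha,hb,hab⟩|⟨h,_⟩ <;> first | (simp_all; exact hab.symm) | simp_all
  · intro h; exact ⟨by simpa using h.ne, Or.inl (Or.inl ⟨x, y, rfl, rfl, h⟩)⟩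

lemma adj_ns {V : Type*} (G : SimpleGraph V) (v : V) (y : V) :
    (addPendant G v).Adj none (some y) ↔ y = v := by
  simp only [addPendant, fromRel_adj]
  constructor
  · rintro ⟨hne, h | h⟩
    · rcases h with ⟨a,b,ha,hb,hab⟩|⟨h,_⟩ <;> simp_all
    · rcases h with ⟨a,b,ha,hb,hab⟩|⟨h,_⟩ <;> simp_all
  · rintro rfl; simp

lemma nbr_some {V : Type*} [Fintype V] (G : SimpleGraph V) (v u : V) :
    (addPendant G v).neighborFinset (some u)
      = (G.neighborFinset u).image some ∪ (if u = v then {none} else ∅) := by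
  ext w
  match w with
  | none => simp [adj_ns, (addPendant G v).adj_comm, eq_comm]; split <;> simp_all
  | some w => simp [adj_ss]; split <;> simp

lemma deg_some {V : Type*} [Fintype V] (G : SimpleGraph V) (v u : V) :
    (addPendant G v).degree (some u) = G.degree u + (if u = v then 1 else 0) := by
  rw [← card_neighborFinset_eq_degree, nbr_some, card_union_of_disjoint, card_image_of_injective _ (Option.some_injective V), card_neighborFinset_eq_degree]
  · split <;> simp
  · split <;> simp

lemma nbr_none {V : Type*} [Fintype V] (G : SimpleGraph V) (v : V) :
    (addPendant G v).neighborFinset none = {some v} := by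
  ext w
  match w with
  | none => simp
  | some w => simp [adj_ns]

lemma deg_none {V : Type*} [Fintype V] (G : SimpleGraph V) (v : V) :
    (addPendant G v).degree none = 1 := by
  rw [← card_neighborFinset_eq_degree, nbr_none]; simp

noncomputable def emb (V : Type*) : Sym2 V ↪ Sym2 (Option V) :=
  ⟨Sym2.map some, Sym2.map.injective (Option.some_injective V)⟩

lemma edge_decomp {V : Type*} [Fintype V] (G : SimpleGraph V) (v : V) :
    (addPendant G v).edgeFinset
      = insert s(none, some v) (G.edgeFinset.map (emb V)) := by
  ext e
  refine Sym2.inductionOn e fun a b => ?_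
  have hmap : ∀ x y : V, (s(some x, some y) ∈ G.edgeFinset.map (emb V) ↔ G.Adj x y) := by
    intro x y
    simp only [mem_map, mem_edgeFinset]
    constructor
    · rintro ⟨e', he', heq⟩
      have : e' = s(x, y) := Sym2.map.injective (Option.some_injective V)
        (by simpa [emb] using heq)
      subst this; simpa using he'
    · intro h; exact ⟨s(x, y), by simpa using h, by simp [emb]⟩
  have hnone : ∀ (y : Option V) (e' : Sym2 V), ¬ (emb V e' = s(none, y)) := by
    intro y e'
    refine Sym2.inductionOn e' fun a b => ?_
    simp [emb, Sym2.eq_iff]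
  have key : ∀ y : Option V, (s(none, y) ∈ (addPendant G v).edgeFinset
      ↔ s(none, y) ∈ insert s(none, some v) (G.edgeFinset.map (emb V))) := by
    intro y
    simp only [mem_edgeFinset, mem_insert, mem_map, mem_edgeSet]
    constructor
    · intro h
      match y with
      | none => exact absurd h (by simp)
      | some y => left; rw [(adj_ns G v y).1 h]
    · rintro (h | ⟨e', _, h⟩)
      · rw [Sym2.eq_iff] at h
        rcases h with ⟨_, rfl⟩ | ⟨h, _⟩
        · exact (adj_ns G v v).2 rfl
        · exact absurd h (by simp)
      · exact absurd h (hnone _ _)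
  match a, b with
  | none, none =>
      simp only [mem_edgeFinset, mem_insert, mem_map, mem_edgeSet]
      constructor
      · intro h; exact absurd h (by simp)
      · rintro (h | ⟨e', _, h⟩)
        · rw [Sym2.eq_iff] at h; simp at h
        · exact absurd h (hnone _ _)
  | none, some y => exact key (some y)
  | some x, none => rw [Sym2.eq_swap]; exact key (some x)
  | some x, some y =>
      simp only [mem_edgeFinset, mem_insert, mem_map, mem_edgeSet, adj_ss, hmap]
      constructor
      · intro h; right; exact h
      · rintro (h | h)
        · rw [Sym2.eq_iff] at h; simp at h
        · exact h

lemma none_not_mem_map {V : Type*} [Fintype V] (G : SimpleGraph V) (y : Option V) :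
    s(none, y) ∉ G.edgeFinset.map (emb V) := by
  simp only [mem_map]
  rintro ⟨e', _, h⟩
  revert h
  refine Sym2.inductionOn e' fun a b => ?_
  simp [emb, Sym2.eq_iff]

lemma filter_incidence {V : Type*} [Fintype V] (G : SimpleGraph V) (v : V) :
    {e ∈ G.edgeFinset | v ∈ e} = (G.neighborFinset v).image (fun w => s(v, w)) := by
  ext e
  refine Sym2.inductionOn e fun a b => ?_
  simp only [mem_filter, mem_edgeFinset, mem_edgeSet, Sym2.mem_iff, mem_image,
    mem_neighborFinset]
  constructor
  · rintro ⟨hab, rfl | rfl⟩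
    · exact ⟨b, hab, rfl⟩
    · exact ⟨a, hab.symm, Sym2.eq_swap⟩
  · rintro ⟨w, hw, heq⟩
    rw [Sym2.eq_iff] at heq
    rcases heq with ⟨rfl, rfl⟩ | ⟨rfl, rfl⟩
    · exact ⟨hw, Or.inl rfl⟩
    · exact ⟨hw.symm, Or.inr rfl⟩

lemma term_bound {a b : ℝ} (ha : 1 ≤ a) (hb : 2 ≤ b) :
    1 / Real.sqrt ((a+1) * b) - 1 / Real.sqrt (a * b) ≥
      (1 / Real.sqrt 2) * (1 / Real.sqrt (a+1) - 1 / Real.sqrt a) := by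
  have ha0 : (0:ℝ) < a := by linarith
  have hb0 : (0:ℝ) < b := by linarith
  rw [Real.sqrt_mul (by linarith) b, Real.sqrt_mul (by linarith) b]
  have hp : 0 < Real.sqrt a := Real.sqrt_pos.2 ha0
  have hq : 0 < Real.sqrt (a+1) := Real.sqrt_pos.2 (by linarith)
  have hu : Real.sqrt 2 ≤ Real.sqrt b := Real.sqrt_le_sqrt hb
  have hr : (0:ℝ) < Real.sqrt 2 := Real.sqrt_pos.2 (by norm_num)
  have ht : 1 / Real.sqrt (a+1) - 1 / Real.sqrt a ≤ 0 := by
    have : Real.sqrt a ≤ Real.sqrt (a+1) := Real.sqrt_le_sqrt (by linarith)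
    have := one_div_le_one_div_of_le hp this
    linarith
  have h1 : 1 / Real.sqrt b ≤ 1 / Real.sqrt 2 := one_div_le_one_div_of_le hr hu
  have key : (1 / Real.sqrt b) * (1 / Real.sqrt (a+1) - 1 / Real.sqrt a) ≥
      (1 / Real.sqrt 2) * (1 / Real.sqrt (a+1) - 1 / Real.sqrt a) := by
    rcases le_or_gt 0 (1 / Real.sqrt (a+1) - 1 / Real.sqrt a) with h | h
    · nlinarith
    · nlinarith
  calc 1 / (Real.sqrt (a+1) * Real.sqrt b) - 1 / (Real.sqrt a * Real.sqrt b)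
      = (1 / Real.sqrt b) * (1 / Real.sqrt (a+1) - 1 / Real.sqrt a) := by
        field_simp
    _ ≥ _ := key

lemma second_part (d : ℝ) (hd : 0 ≤ d) :
    1 / Real.sqrt (d + 1) - (d / Real.sqrt 2) * (1 / Real.sqrt d - 1 / Real.sqrt (d+1)) >
      (Real.sqrt (d+1) - Real.sqrt d) / Real.sqrt 2 := by
  have hr : (1:ℝ) < Real.sqrt 2 := by
    have := Real.lt_sqrt (x := 1) (y := 2) (by norm_num)
    rw [this]; norm_num
  have hr0 : (0:ℝ) < Real.sqrt 2 := by linarith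
  have hr2 : Real.sqrt 2 * Real.sqrt 2 = 2 := Real.mul_self_sqrt (by norm_num)
  have hs0 : 0 < Real.sqrt (d+1) := Real.sqrt_pos.2 (by linarith)
  have hs2 : Real.sqrt (d+1) * Real.sqrt (d+1) = d + 1 := Real.mul_self_sqrt (by linarith)
  rcases eq_or_lt_of_le hd with h | h
  · subst h
    simp only [Real.sqrt_zero, zero_add, Real.sqrt_one]
    rw [gt_iff_lt, div_lt_iff₀ hr0]
    norm_num
    nlinarith
  · have ht0 : 0 < Real.sqrt d := Real.sqrt_pos.2 h
    have ht2 : Real.sqrt d * Real.sqrt d = d := Real.mul_self_sqrt hd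
    have e1 : d / Real.sqrt 2 * (1 / Real.sqrt d - 1 / Real.sqrt (d+1)) +
        (Real.sqrt (d+1) - Real.sqrt d) / Real.sqrt 2
        = 1 / (Real.sqrt 2 * Real.sqrt (d+1)) := by
      field_simp
      linear_combination Real.sqrt d * hs2 - Real.sqrt (d+1) * ht2
    have e2 : 1 / (Real.sqrt 2 * Real.sqrt (d+1)) < 1 / Real.sqrt (d+1) := by
      apply one_div_lt_one_div_of_lt hs0
      nlinarith
    linarith


lemma main_ge {V : Type*} [Fintype V] (G : SimpleGraph V)
    (v : V) (hnb : ∀ w : V, G.Adj v w → 2 ≤ G.degree w) :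
    randic (addPendant G v) - randic G ≥
      1 / Real.sqrt ((G.degree v : ℝ) + 1) -
        ((G.degree v : ℝ) / Real.sqrt 2) *
          (1 / Real.sqrt (G.degree v) - 1 / Real.sqrt ((G.degree v : ℝ) + 1)) := by
  classical
  set G' := addPendant G v with hG'
  set d : ℕ := G.degree v with hd
  -- degree facts in G'
  have hdegv : (G'.degree (some v) : ℝ) = (d : ℝ) + 1 := by
    rw [hG', deg_some, if_pos rfl]; push_cast; ring
  have hdegn : (G'.degree (none : Option V) : ℝ) = 1 := by rw [hG', deg_none]; norm_num
  have hdegu : ∀ u : V, u ≠ v → (G'.degree (some u) : ℝ) = (G.degree u : ℝ) := by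
    intro u hu; rw [hG', deg_some, if_neg hu]; push_cast; ring
  -- step 1 : expand randic G'
  have h1 : randic G' = 1 / Real.sqrt ((d : ℝ) + 1) +
      ∑ e ∈ G.edgeFinset,
        Sym2.lift ⟨fun u v => 1 / Real.sqrt ((G'.degree u : ℝ) * (G'.degree v : ℝ)),
          fun u v => by simp [mul_comm]⟩ (Sym2.map some e) := by
    rw [randic,
      show G'.edgeFinset = insert s(none, some v) (G.edgeFinset.map (emb V)) from
        edge_decomp G v,
      sum_insert (none_not_mem_map G (some v)), Finset.sum_map, Sym2.lift_mk]
    dsimp only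
    rw [hdegn, hdegv, one_mul]
    rfl
  -- step 2: the difference of sums restricted to incident edges
  set F : Sym2 V → ℝ := fun e =>
      Sym2.lift ⟨fun u v => 1 / Real.sqrt ((G'.degree u : ℝ) * (G'.degree v : ℝ)),
        fun u v => by simp [mul_comm]⟩ (Sym2.map some e) -
      Sym2.lift ⟨fun u v => 1 / Real.sqrt ((G.degree u : ℝ) * (G.degree v : ℝ)),
        fun u v => by simp [mul_comm]⟩ e with hF
  have h2 : randic G' - randic G = 1 / Real.sqrt ((d : ℝ) + 1) +
      ∑ e ∈ G.edgeFinset, F e := by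
    rw [h1, randic, add_sub_assoc, ← Finset.sum_sub_distrib]
  have h3 : ∑ e ∈ G.edgeFinset, F e = ∑ e ∈ {e ∈ G.edgeFinset | v ∈ e}, F e := by
    symm
    apply Finset.sum_subset (filter_subset _ _)
    intro e he hne
    rw [mem_filter, not_and] at hne
    have hv : v ∉ e := hne he
    revert he hv
    refine Sym2.inductionOn e fun a b => ?_
    intro he hv
    simp only [Sym2.mem_iff, not_or] at hv
    rw [hF]
    simp only [Sym2.map_pair_eq, Sym2.lift_mk]
    rw [hdegu a (fun h => hv.1 h.symm), hdegu b (fun h => hv.2 h.symm)]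
    ring
  have h4 : ∑ e ∈ {e ∈ G.edgeFinset | v ∈ e}, F e
      = ∑ w ∈ G.neighborFinset v, F s(v, w) := by
    rw [filter_incidence]
    rw [Finset.sum_image]
    intro w hw w' hw' h
    exact Sym2.congr_right.mp h
  -- per-term bound
  set c : ℝ := (1 / Real.sqrt 2) *
      (1 / Real.sqrt ((d : ℝ) + 1) - 1 / Real.sqrt (d : ℝ)) with hc
  have h5 : ∀ w ∈ G.neighborFinset v, c ≤ F s(v, w) := by
    intro w hw
    rw [mem_neighborFinset] at hw
    have hwv : w ≠ v := fun h => G.irrefl (h ▸ hw)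
    have hd1 : (1 : ℝ) ≤ (d : ℝ) := by
      have : 0 < G.degree v := by
        rw [← card_neighborFinset_eq_degree, Finset.card_pos]
        exact ⟨w, by rwa [mem_neighborFinset]⟩
      exact_mod_cast this
    have hw2 : (2 : ℝ) ≤ (G.degree w : ℝ) := by exact_mod_cast hnb w hw
    rw [hF]
    simp only [Sym2.map_pair_eq, Sym2.lift_mk]
    rw [hdegv, hdegu w hwv]
    have := term_bound hd1 hw2
    rw [hc]
    rw [← hd]
    ring_nf at this ⊢
    linarith
  have h6 : (d : ℝ) * c ≤ ∑ w ∈ G.neighborFinset v, F s(v, w) := by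
    calc (d : ℝ) * c = ∑ _w ∈ G.neighborFinset v, c := by
          rw [Finset.sum_const, nsmul_eq_mul, card_neighborFinset_eq_degree]
      _ ≤ _ := Finset.sum_le_sum h5
  rw [ge_iff_le, h2, h3, h4]
  have : ((d : ℝ) / Real.sqrt 2) *
      (1 / Real.sqrt (d : ℝ) - 1 / Real.sqrt ((d : ℝ) + 1)) = -((d:ℝ) * c) := by
    rw [hc]; ring
  rw [this]
  linarith


end AuxRandic

theorem randic_addPendant_of_two_le_degree {V : Type*} [Fintype V] (G : SimpleGraph V)
    (v : V) (hnb : ∀ w : V, G.Adj v w → 2 ≤ G.degree w) :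
    randic (addPendant G v) - randic G ≥
      1 / Real.sqrt ((G.degree v : ℝ) + 1) -
        ((G.degree v : ℝ) / Real.sqrt 2) *
          (1 / Real.sqrt (G.degree v) - 1 / Real.sqrt ((G.degree v : ℝ) + 1)) ∧
    1 / Real.sqrt ((G.degree v : ℝ) + 1) -
        ((G.degree v : ℝ) / Real.sqrt 2) *
          (1 / Real.sqrt (G.degree v) - 1 / Real.sqrt ((G.degree v : ℝ) + 1)) >
      (Real.sqrt ((G.degree v : ℝ) + 1) - Real.sqrt (G.degree v)) / Real.sqrt 2 := by
  exact ⟨main_ge G v hnb, second_part (G.degree v) (Nat.cast_nonneg _)⟩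
end

section
/- Let G be a cactus with n vertices, k cycles, and b bridges. Then the diameter d of G satisfies d ≤ (n + k + b - 1)/2. -/
open SimpleGraph Finset
open scoped Classical

/-- Two vertices on a closed walk are at distance at most half the walk's length. -/
lemma two_mul_dist_le_of_mem_closed_walk {V : Type*} {G : SimpleGraph V} {w a z : V}
    (c : G.Walk w w) (ha : a ∈ c.support) (hz : z ∈ c.support) :
    2 * G.dist a z ≤ c.length := by
  have hsplit := c.take_spec ha
  have hlen : (c.takeUntil a ha).length + (c.dropUntil a ha).length = c.length := by
    have := congrArg SimpleGraph.Walk.length hsplit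
    rwa [SimpleGraph.Walk.length_append] at this
  have hz' : z ∈ (c.takeUntil a ha).support ∨ z ∈ (c.dropUntil a ha).support := by
    rw [← SimpleGraph.Walk.mem_support_append_iff, hsplit]; exact hz
  rcases hz' with h1 | h2
  · have e1 : G.dist a z ≤
        ((c.dropUntil a ha).append ((c.takeUntil a ha).takeUntil z h1)).length :=
      SimpleGraph.dist_le _
    have e2 : G.dist z a ≤ ((c.takeUntil a ha).dropUntil z h1).length :=
      SimpleGraph.dist_le _
    have e3 : ((c.takeUntil a ha).takeUntil z h1).length
        + ((c.takeUntil a ha).dropUntil z h1).length = (c.takeUntil a ha).length := by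
      have := congrArg SimpleGraph.Walk.length ((c.takeUntil a ha).take_spec h1)
      rwa [SimpleGraph.Walk.length_append] at this
    rw [SimpleGraph.Walk.length_append] at e1
    have hcomm : G.dist z a = G.dist a z := SimpleGraph.dist_comm
    omega
  · have e1 : G.dist a z ≤ ((c.dropUntil a ha).takeUntil z h2).length :=
      SimpleGraph.dist_le _
    have e2 : G.dist z a ≤
        (((c.dropUntil a ha).dropUntil z h2).append (c.takeUntil a ha)).length :=
      SimpleGraph.dist_le _
    have e3 : ((c.dropUntil a ha).takeUntil z h2).length
        + ((c.dropUntil a ha).dropUntil z h2).length = (c.dropUntil a ha).length := by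
      have := congrArg SimpleGraph.Walk.length ((c.dropUntil a ha).take_spec h2)
      rwa [SimpleGraph.Walk.length_append] at this
    rw [SimpleGraph.Walk.length_append] at e2
    have hcomm : G.dist z a = G.dist a z := SimpleGraph.dist_comm
    omega

/-- On a geodesic, the edges belonging to a fixed closed walk `c` all fit between two
vertices of `c` on the geodesic. -/
lemma geodesic_filter_aux {V : Type*} {G : SimpleGraph V} (hconn : G.Connected) {w : V}
    (c : G.Walk w w) :
    ∀ {u v : V} (p : G.Walk u v), p.length = G.dist u v →
      (p.edges.filter (· ∈ c.edges)).length = 0 ∨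
      ∃ a z, a ∈ c.support ∧ z ∈ c.support ∧
        G.dist u a + (G.dist a z + G.dist z v) = G.dist u v ∧
        (p.edges.filter (· ∈ c.edges)).length ≤ G.dist a z := by
  intro u v p
  induction p with
  | nil => intro _; left; simp
  | @cons u w' v h p' ih =>
    intro hp
    have hd1 : G.dist u w' = 1 := SimpleGraph.dist_eq_one_iff_adj.mpr h
    have hle' : G.dist w' v ≤ p'.length := SimpleGraph.dist_le p'
    have htri : G.dist u v ≤ G.dist u w' + G.dist w' v := hconn.dist_triangle
    have hlen : p'.length + 1 = G.dist u v := by simpa using hp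
    have hp' : p'.length = G.dist w' v := by omega
    have hsum : G.dist u v = 1 + G.dist w' v := by omega
    by_cases he : s(u, w') ∈ c.edges
    · have hflen : ((SimpleGraph.Walk.cons h p').edges.filter (· ∈ c.edges)).length
          = (p'.edges.filter (· ∈ c.edges)).length + 1 := by
        simp [SimpleGraph.Walk.edges_cons, List.filter_cons, he]
      have hu : u ∈ c.support := c.fst_mem_support_of_mem_edges he
      have hw' : w' ∈ c.support := c.snd_mem_support_of_mem_edges he
      rcases ih hp' with h0 | ⟨a', z, hac, hzc, heq, hle⟩
      · right
        refine ⟨u, w', hu, hw', ?_, ?_⟩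
        · have : G.dist u u = 0 := SimpleGraph.dist_self
          omega
        · omega
      · right
        have t1 : G.dist w' z ≤ G.dist w' a' + G.dist a' z := hconn.dist_triangle
        have t2 : G.dist w' v ≤ G.dist w' z + G.dist z v := hconn.dist_triangle
        have t3 : G.dist u z ≤ G.dist u w' + G.dist w' z := hconn.dist_triangle
        have t4 : G.dist u v ≤ G.dist u z + G.dist z v := hconn.dist_triangle
        have hself : G.dist u u = 0 := SimpleGraph.dist_self
        exact ⟨u, z, hu, hzc, by omega, by omega⟩
    · have hflen : ((SimpleGraph.Walk.cons h p').edges.filter (· ∈ c.edges)).length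
          = (p'.edges.filter (· ∈ c.edges)).length := by
        simp [SimpleGraph.Walk.edges_cons, List.filter_cons, he]
      rcases ih hp' with h0 | ⟨a, z, hac, hzc, heq, hle⟩
      · left; omega
      · right
        have t1 : G.dist u a ≤ G.dist u w' + G.dist w' a := hconn.dist_triangle
        have t2 : G.dist u v ≤ G.dist u a + G.dist a v := hconn.dist_triangle
        have t3 : G.dist a v ≤ G.dist a z + G.dist z v := hconn.dist_triangle
        exact ⟨a, z, hac, hzc, by omega, by omega⟩

/-- A geodesic uses at most half of the edges of any closed walk. -/
lemma geodesic_cycle_bound {V : Type*} {G : SimpleGraph V} (hconn : G.Connected) {w : V}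
    (c : G.Walk w w) {u v : V} (p : G.Walk u v) (hp : p.length = G.dist u v) :
    2 * (p.edges.filter (· ∈ c.edges)).length ≤ c.length := by
  rcases geodesic_filter_aux hconn c p hp with h0 | ⟨a, z, hac, hzc, _, hle⟩
  · omega
  · have := two_mul_dist_le_of_mem_closed_walk c hac hzc
    omega

noncomputable def cycOf {V : Type*} (G : SimpleGraph V) (e : Sym2 V) : Finset (Sym2 V) :=
  if h : ∃ w, ∃ c : G.Walk w w, c.IsCycle ∧ e ∈ c.edges
  then h.choose_spec.choose.edges.toFinset else ∅

lemma cycOf_spec {V : Type*} (G : SimpleGraph V) (e : Sym2 V)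
    (h : ∃ w, ∃ c : G.Walk w w, c.IsCycle ∧ e ∈ c.edges) :
    ∃ w, ∃ c : G.Walk w w, c.IsCycle ∧ e ∈ c.edges ∧ cycOf G e = c.edges.toFinset :=
  ⟨h.choose, h.choose_spec.choose, h.choose_spec.choose_spec.1,
    h.choose_spec.choose_spec.2, by rw [cycOf, dif_pos h]⟩

theorem cactus_diam_le {V : Type*} [Fintype V] (G : SimpleGraph V) (hG : IsCactus G)
    (k b : ℕ) (hk : G.edgeFinset.card + 1 = Fintype.card V + k)
    (hb : b = Nat.card {e : Sym2 V // G.IsBridge e}) :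
    (graphDiam G : ℝ) ≤ ((Fintype.card V : ℝ) + k + b - 1) / 2 := by
  obtain ⟨hconn, hcac⟩ := hG
  haveI : Nonempty V := hconn.nonempty
  -- realize the diameter as a distance
  obtain ⟨u0, -, hu0⟩ := Finset.exists_mem_eq_sup (univ : Finset V) univ_nonempty
    (fun v => ecc G v)
  obtain ⟨v0, -, hv0⟩ := Finset.exists_mem_eq_sup (univ : Finset V) univ_nonempty
    (fun u => G.dist u0 u)
  have hD : graphDiam G = G.dist u0 v0 := by
    rw [graphDiam, hu0, ecc, hv0]
  obtain ⟨p, hp⟩ := hconn.exists_walk_length_eq_dist u0 v0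
  have hpath : p.IsPath := p.isPath_of_length_eq_dist hp
  set D := graphDiam G with hDdef
  set P : Finset (Sym2 V) := p.edges.toFinset with hP
  have hPcard : P.card = D := by
    rw [hP, List.toFinset_card_of_nodup hpath.isTrail.edges_nodup,
      SimpleGraph.Walk.length_edges, hp, hD]
  have hPsub : P ⊆ G.edgeFinset := by
    intro e heP
    rw [SimpleGraph.mem_edgeFinset]
    exact p.edges_subset_edgeSet (List.mem_toFinset.mp heP)
  -- bridges
  have hbcard : b = (univ.filter (fun e : Sym2 V => G.IsBridge e)).card := by
    rw [hb, Nat.card_eq_fintype_card, Fintype.card_subtype]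
  have hbridge_le : (P.filter (fun e => G.IsBridge e)).card ≤ b := by
    rw [hbcard]
    exact card_le_card fun e he => mem_filter.mpr ⟨mem_univ _, (mem_filter.mp he).2⟩
  set NB : Finset (Sym2 V) := P.filter (fun e => ¬ G.IsBridge e) with hNBdef
  have hex : ∀ e ∈ NB, ∃ w, ∃ c : G.Walk w w, c.IsCycle ∧ e ∈ c.edges := by
    intro e he
    obtain ⟨heP, hnb⟩ := mem_filter.mp he
    have heG : e ∈ G.edgeSet := p.edges_subset_edgeSet (List.mem_toFinset.mp heP)
    by_contra hno
    push_neg at hno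
    exact hnb ((SimpleGraph.isBridge_iff_forall_cycle_notMem heG).mpr
      (fun w c hc => hno w c hc))
  -- properties of cycOf
  have hmem : ∀ e ∈ NB, e ∈ cycOf G e := by
    intro e he
    obtain ⟨w, c, hc, hec, hEq⟩ := cycOf_spec G e (hex e he)
    rw [hEq]; exact List.mem_toFinset.mpr hec
  have hsubE : ∀ e ∈ NB, cycOf G e ⊆ G.edgeFinset := by
    intro e he f hf
    obtain ⟨w, c, hc, hec, hEq⟩ := cycOf_spec G e (hex e he)
    rw [hEq] at hf
    rw [SimpleGraph.mem_edgeFinset]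
    exact c.edges_subset_edgeSet (List.mem_toFinset.mp hf)
  have hhalf : ∀ e ∈ NB, (cycOf G e ∩ P).card ≤ (cycOf G e \ P).card := by
    intro e he
    obtain ⟨w, c, hc, hec, hEq⟩ := cycOf_spec G e (hex e he)
    have h2t : 2 * (p.edges.filter (· ∈ c.edges)).length ≤ c.length :=
      geodesic_cycle_bound hconn c p hp
    have hcardA : (cycOf G e).card = c.length := by
      rw [hEq, List.toFinset_card_of_nodup hc.isTrail.edges_nodup,
        SimpleGraph.Walk.length_edges]
    have hInter : cycOf G e ∩ P = (p.edges.filter (· ∈ c.edges)).toFinset := by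
      rw [hEq, hP]
      ext f
      simp only [Finset.mem_inter, List.mem_toFinset, List.mem_filter,
        decide_eq_true_eq]
      tauto
    have hIntercard : (cycOf G e ∩ P).card ≤ (p.edges.filter (· ∈ c.edges)).length := by
      rw [hInter]; exact List.toFinset_card_le _
    have hsd : (cycOf G e ∩ P).card + (cycOf G e \ P).card = (cycOf G e).card :=
      Finset.card_inter_add_card_sdiff _ _
    omega
  have hdisj : ∀ e ∈ NB, ∀ e' ∈ NB, cycOf G e ≠ cycOf G e' → Disjoint (cycOf G e) (cycOf G e') := by
    intro e he e' he' hne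
    obtain ⟨w, c, hc, hec, hEq⟩ := cycOf_spec G e (hex e he)
    obtain ⟨w', c', hc', hec', hEq'⟩ := cycOf_spec G e' (hex e' he')
    by_contra hnd
    obtain ⟨f, hf1, hf2⟩ := Finset.not_disjoint_iff.mp hnd
    rw [hEq] at hf1; rw [hEq'] at hf2
    exact hne (by rw [hEq, hEq',
      hcac c c' hc hc' f (List.mem_toFinset.mp hf1) (List.mem_toFinset.mp hf2)])
  -- counting
  set T : Finset (Finset (Sym2 V)) := NB.image (cycOf G) with hT
  have hTdisj : ∀ A ∈ T, ∀ A' ∈ T, A ≠ A' → Disjoint A A' := by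
    intro A hA A' hA' hne
    obtain ⟨e, he, rfl⟩ := mem_image.mp hA
    obtain ⟨e', he', rfl⟩ := mem_image.mp hA'
    exact hdisj e he e' he' hne
  have hsub1 : NB ⊆ T.biUnion (fun A => A ∩ P) := by
    intro e he
    exact mem_biUnion.mpr ⟨cycOf G e, mem_image_of_mem _ he,
      mem_inter.mpr ⟨hmem e he, (mem_filter.mp he).1⟩⟩
  have c1 : NB.card ≤ ∑ A ∈ T, (A ∩ P).card :=
    le_trans (card_le_card hsub1) Finset.card_biUnion_le
  have c2 : ∑ A ∈ T, (A ∩ P).card ≤ ∑ A ∈ T, (A \ P).card := by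
    refine Finset.sum_le_sum ?_
    intro A hA
    obtain ⟨e, he, rfl⟩ := mem_image.mp hA
    exact hhalf e he
  have c3 : ∑ A ∈ T, (A \ P).card = (T.biUnion (fun A => A \ P)).card := by
    refine (Finset.card_biUnion ?_).symm
    intro A hA A' hA' hne
    exact (hTdisj A hA A' hA' hne).mono sdiff_le sdiff_le
  have c4 : T.biUnion (fun A => A \ P) ⊆ G.edgeFinset \ P := by
    intro f hf
    obtain ⟨A, hA, hfA⟩ := mem_biUnion.mp hf
    obtain ⟨e, he, rfl⟩ := mem_image.mp hA
    obtain ⟨hf1, hf2⟩ := mem_sdiff.mp hfA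
    exact mem_sdiff.mpr ⟨hsubE e he hf1, hf2⟩
  have hNBle : NB.card ≤ (G.edgeFinset \ P).card :=
    le_trans c1 (le_trans c2 (le_trans (le_of_eq c3) (card_le_card c4)))
  have hsdcard : (G.edgeFinset \ P).card = G.edgeFinset.card - D := by
    rw [card_sdiff_of_subset hPsub, hPcard]
  have hsplitD : (P.filter (fun e => G.IsBridge e)).card + NB.card = D := by
    rw [hNBdef, ← hPcard]
    exact Finset.card_filter_add_card_filter_not (fun e => G.IsBridge e)
  have hDm : D ≤ G.edgeFinset.card := hPcard ▸ card_le_card hPsub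
  have key : 2 * D + 1 ≤ Fintype.card V + k + b := by
    have hn1 : 1 ≤ Fintype.card V := Fintype.card_pos
    omega
  have keyR : (2 * D + 1 : ℝ) ≤ (Fintype.card V : ℝ) + k + b := by
    have := (Nat.cast_le (α := ℝ)).mpr key
    push_cast at this
    linarith
  rw [le_div_iff₀ (by norm_num : (0:ℝ) < 2)]
  linarith
end

section
/- Let G be a tree. Then R(G) ≥ 1 + Σ_v (√(d_v) - 1), where the sum runs over all vertices, with equality if G is a star. -/
open SimpleGraph Finset
open scoped Classical

/-- Weighted handshake over darts. -/
lemma sum_dart_fst {V : Type*} [Fintype V] (G : SimpleGraph V) [DecidableRel G.Adj]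
    (f : V → ℝ) : ∑ d : G.Dart, f d.fst = ∑ v, (G.degree v : ℝ) * f v := by
  classical
  rw [← Finset.sum_fiberwise_of_maps_to (g := fun d : G.Dart => d.fst)
    (t := (univ : Finset V)) (fun d _ => mem_univ _)]
  refine Finset.sum_congr rfl fun v _ => ?_
  have h1 : ∀ d ∈ univ.filter (fun d : G.Dart => d.fst = v), f d.fst = f v := by
    intro d hd; rw [(mem_filter.mp hd).2]
  rw [Finset.sum_congr rfl h1, Finset.sum_const, nsmul_eq_mul]
  congr 1
  exact_mod_cast G.dart_fst_fiber_card_eq_degree v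

/-- Weighted handshake over edges. -/
lemma sum_edge_lift {V : Type*} [Fintype V] (G : SimpleGraph V) [DecidableRel G.Adj]
    (f : V → ℝ) :
    ∑ e ∈ G.edgeFinset, Sym2.lift ⟨fun u v => f u + f v, fun u v => add_comm _ _⟩ e
      = ∑ v, (G.degree v : ℝ) * f v := by
  classical
  rw [← sum_dart_fst,
    ← Finset.sum_fiberwise_of_maps_to (g := fun d : G.Dart => d.edge)
    (t := G.edgeFinset) (fun d _ => by simp [d.edge_mem])]
  refine Finset.sum_congr rfl fun e he => ?_
  rw [mem_edgeFinset] at he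
  induction e with
  | h u v =>
    have hd : (univ.filter fun d : G.Dart => d.edge = s(u, v)) =
        {(⟨(u,v), he⟩ : G.Dart), (⟨(u,v), he⟩ : G.Dart).symm} := by
      exact Dart.edge_fiber (⟨(u,v), he⟩ : G.Dart)
    rw [hd, Finset.sum_pair (⟨(u,v), he⟩ : G.Dart).symm_ne.symm]
    simp [Dart.symm]

lemma randic_key {V : Type*} [Fintype V] (G : SimpleGraph V) (hG : G.IsTree) :
    randic G = 1 + ∑ v : V, (Real.sqrt (G.degree v) - 1)
      + ∑ e ∈ G.edgeFinset,
          Sym2.lift ⟨fun u v => (1 - 1 / Real.sqrt (G.degree u)) *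
            (1 - 1 / Real.sqrt (G.degree v)),
            fun u v => by ring⟩ e := by
  classical
  have h1 : randic G = ∑ e ∈ G.edgeFinset,
      ((Sym2.lift ⟨fun u v => (1 - 1 / Real.sqrt (G.degree u)) *
            (1 - 1 / Real.sqrt (G.degree v)), fun u v => by ring⟩ e)
        + (Sym2.lift ⟨fun u v => (fun w => 1 / Real.sqrt (G.degree w)) u
            + (fun w => 1 / Real.sqrt (G.degree w)) v,
            fun u v => add_comm _ _⟩ e) - 1) := by
    refine Finset.sum_congr rfl fun e he => ?_
    rw [mem_edgeFinset] at he
    induction e with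
    | h u v =>
      rw [mem_edgeSet] at he
      have hu : (0:ℝ) < Real.sqrt (G.degree u) :=
        Real.sqrt_pos.2 (by exact_mod_cast (G.degree_pos_iff_exists_adj u).2 ⟨v, he⟩)
      have hv : (0:ℝ) < Real.sqrt (G.degree v) :=
        Real.sqrt_pos.2 (by exact_mod_cast (G.degree_pos_iff_exists_adj v).2 ⟨u, he.symm⟩)
      simp only [Sym2.lift_mk]
      rw [Real.sqrt_mul (Nat.cast_nonneg _)]
      field_simp
      ring
  rw [h1, Finset.sum_sub_distrib, Finset.sum_add_distrib, sum_edge_lift, Finset.sum_const,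
    nsmul_eq_mul, mul_one]
  have hsq : ∀ v : V, (G.degree v : ℝ) * (1 / Real.sqrt (G.degree v))
      = Real.sqrt (G.degree v) := by
    intro v
    rw [mul_one_div, Real.div_sqrt]
  have hcard : (G.edgeFinset.card : ℝ) = (Fintype.card V : ℝ) - 1 := by
    have := hG.card_edgeFinset
    have h2 : ((G.edgeFinset.card : ℝ) + 1) = (Fintype.card V : ℝ) := by
      exact_mod_cast this
    linarith
  rw [Finset.sum_congr rfl (fun v _ => hsq v), hcard]
  rw [Finset.sum_sub_distrib, Finset.sum_const, nsmul_eq_mul, mul_one, card_univ]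
  ring

lemma star_adj_eq {V : Type*} (G : SimpleGraph V) (hG : G.IsTree) (w : V)
    (hw : ∀ u : V, u ≠ w → G.Adj w u) :
    ∀ x y : V, x ≠ w → G.Adj x y → y = w := by
  intro x y hx hxy
  by_contra hy
  have hyx : y ≠ x := (G.ne_of_adj hxy).symm
  have hp1 : (Walk.cons ((hw x hx).symm) Walk.nil : G.Walk x w).IsPath := by
    simp [Walk.isPath_def, hx]
  have hp2 : (Walk.cons hxy (Walk.cons ((hw y hy).symm) Walk.nil) : G.Walk x w).IsPath := by
    simp [Walk.isPath_def]
    exact ⟨⟨hyx.symm, hx⟩, hy⟩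
  have := (hG.existsUnique_path x w).unique hp1 hp2
  have hlen := congrArg Walk.length this
  simp at hlen

lemma star_degree_one {V : Type*} [Fintype V] (G : SimpleGraph V) (hG : G.IsTree) (w : V)
    (hw : ∀ u : V, u ≠ w → G.Adj w u) (x : V) (hx : x ≠ w) : G.degree x = 1 := by
  classical
  have hn : G.neighborFinset x = {w} := by
    ext y
    simp only [mem_neighborFinset, mem_singleton]
    constructor
    · exact fun h => star_adj_eq G hG w hw x y hx h
    · rintro rfl; exact (hw x hx).symm
  rw [← card_neighborFinset_eq_degree, hn, card_singleton]

theorem tree_randic_ge_valency_sum {V : Type*} [Fintype V] (G : SimpleGraph V)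
    (hG : G.IsTree) :
    randic G ≥ 1 + ∑ v : V, (Real.sqrt (G.degree v) - 1) ∧
    ((∃ v : V, ∀ u : V, u ≠ v → G.Adj v u) →
      randic G = 1 + ∑ v : V, (Real.sqrt (G.degree v) - 1)) := by
  classical
  rw [randic_key G hG]
  have hfac : ∀ u : V, G.degree u ≠ 0 → 0 ≤ 1 - 1 / Real.sqrt (G.degree u) := by
    intro u hu
    have h1 : (1:ℝ) ≤ (G.degree u : ℝ) := by
      exact_mod_cast Nat.one_le_iff_ne_zero.2 hu
    have h2 : (1:ℝ) ≤ Real.sqrt (G.degree u) := by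
      rw [show (1:ℝ) = Real.sqrt 1 by simp]
      exact Real.sqrt_le_sqrt h1
    have : 1 / Real.sqrt (G.degree u) ≤ 1 := by
      rw [div_le_one (lt_of_lt_of_le one_pos h2)]
      exact h2
    linarith
  constructor
  · have hnn : 0 ≤ ∑ e ∈ G.edgeFinset,
        Sym2.lift ⟨fun u v => (1 - 1 / Real.sqrt (G.degree u)) *
          (1 - 1 / Real.sqrt (G.degree v)), fun u v => by ring⟩ e := by
      refine Finset.sum_nonneg fun e he => ?_
      rw [mem_edgeFinset] at he
      induction e with
      | h u v =>
        rw [mem_edgeSet] at he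
        have hu : G.degree u ≠ 0 :=
          Nat.pos_iff_ne_zero.1 ((G.degree_pos_iff_exists_adj u).2 ⟨v, he⟩)
        have hv : G.degree v ≠ 0 :=
          Nat.pos_iff_ne_zero.1 ((G.degree_pos_iff_exists_adj v).2 ⟨u, he.symm⟩)
        simpa using mul_nonneg (hfac u hu) (hfac v hv)
    linarith
  · rintro ⟨w, hw⟩
    have hz : ∑ e ∈ G.edgeFinset,
        Sym2.lift ⟨fun u v => (1 - 1 / Real.sqrt (G.degree u)) *
          (1 - 1 / Real.sqrt (G.degree v)), fun u v => by ring⟩ e = 0 := by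
      refine Finset.sum_eq_zero fun e he => ?_
      rw [mem_edgeFinset] at he
      induction e with
      | h u v =>
        rw [mem_edgeSet] at he
        simp only [Sym2.lift_mk]
        by_cases hu : u = w
        · have hv : v ≠ w := by rw [← hu]; exact (G.ne_of_adj he).symm
          rw [star_degree_one G hG w hw v hv]
          simp
        · have : v = w := star_adj_eq G hG w hw u v hu he
          rw [star_degree_one G hG w hw u hu]
          simp
    rw [hz, add_zero]
end

section
/- Let G be a tree on n ≥ 3 vertices. Then R(G) ≥ √(n-1), with equality only for the star on n vertices. (For n = 2, R = 1.) -/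
open SimpleGraph Finset
open scoped Classical

set_option linter.unusedSectionVars false
section Helpers


variable {V : Type*} [Fintype V] {G : SimpleGraph V}

lemma dart_sum_eq (G : SimpleGraph V) (f : V → V → ℝ) :
    ∑ d : G.Dart, f d.fst d.snd = ∑ v, ∑ u ∈ G.neighborFinset v, f v u := by
  rw [← Finset.sum_sigma (univ : Finset V) (fun v => G.neighborFinset v) (fun p => f p.1 p.2)]
  refine Finset.sum_bij (fun (d : G.Dart) _ => (⟨d.fst, d.snd⟩ : Σ _ : V, V)) ?_ ?_ ?_ ?_
  · intro d _
    simp [Finset.mem_sigma, G.mem_neighborFinset, d.adj]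
  · intro d1 _ d2 _ h
    simp only [Sigma.mk.inj_iff, heq_eq_eq] at h
    exact Dart.ext _ _ (Prod.ext h.1 h.2)
  · rintro ⟨v, u⟩ hp
    simp only [Finset.mem_sigma, G.mem_neighborFinset] at hp
    exact ⟨⟨(v, u), hp.2⟩, Finset.mem_univ _, rfl⟩
  · intros; rfl

lemma edge_sum_eq (G : SimpleGraph V) (f : V → V → ℝ) (hf : ∀ u v, f u v = f v u) :
    2 * ∑ e ∈ G.edgeFinset, Sym2.lift ⟨f, hf⟩ e = ∑ v, ∑ u ∈ G.neighborFinset v, f v u := by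
  rw [← dart_sum_eq G f]
  rw [← Finset.sum_fiberwise_of_maps_to (g := Dart.edge) (t := G.edgeFinset)
      (fun d _ => by simp [Dart.edge_mem])]
  rw [Finset.mul_sum]
  refine Finset.sum_congr rfl fun e he => ?_
  obtain ⟨d, rfl⟩ : ∃ d : G.Dart, d.edge = e := by
    rw [mem_edgeFinset] at he
    induction' e with u v
    exact ⟨⟨(u, v), he⟩, rfl⟩
  rw [Dart.edge_fiber d, Finset.sum_pair d.symm_ne.symm]
  have h1 : Sym2.lift ⟨f, hf⟩ d.edge = f d.fst d.snd := by
    cases d with | mk p h => cases p; rfl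
  have h2 : f d.symm.fst d.symm.snd = f d.fst d.snd := by
    cases d with | mk p h => cases p; exact hf _ _
  rw [h1, h2]; ring

lemma two_step_path {v u w : V} (h1 : G.Adj v u) (h2 : G.Adj u w) (hvw : v ≠ w) :
    (Walk.cons h1 (Walk.cons h2 Walk.nil)).IsPath := by
  rw [Walk.isPath_def]
  simp [h1.ne, hvw, h2.ne]

lemma tree_no_two (hG : G.IsTree) {v u u' w : V} (h1 : G.Adj v u) (h2 : G.Adj u w)
    (h1' : G.Adj v u') (h2' : G.Adj u' w) (huu' : u ≠ u') (hwv : w ≠ v) : False := by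
  have hp := two_step_path h1 h2 hwv.symm
  have hq := two_step_path h1' h2' hwv.symm
  have := (hG.existsUnique_path v w).unique hp hq
  have := congrArg Walk.support this
  simp [Walk.support_cons] at this
  exact huu' this

lemma tree_no_tri (hG : G.IsTree) {v u w : V} (h1 : G.Adj v u) (h2 : G.Adj u w)
    (h3 : G.Adj v w) : False := by
  have hp := two_step_path h1 h2 h3.ne
  have hq : (Walk.cons h3 Walk.nil : G.Walk v w).IsPath := by
    rw [Walk.isPath_def]; simp [h3.ne]
  have := (hG.existsUnique_path v w).unique hp hq
  have := congrArg Walk.length this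
  simp [Walk.length_cons] at this

lemma tree_neighbor_deg_sum (hG : G.IsTree) (v : V) :
    ∑ u ∈ G.neighborFinset v, G.degree u ≤ Fintype.card V - 1 := by
  have hstep : ∀ u ∈ G.neighborFinset v,
      G.degree u = ((G.neighborFinset u).erase v).card + 1 := by
    intro u hu
    rw [G.mem_neighborFinset] at hu
    rw [← G.card_neighborFinset_eq_degree, Finset.card_erase_add_one]
    rw [G.mem_neighborFinset]
    exact hu.symm
  rw [Finset.sum_congr rfl hstep, Finset.sum_add_distrib, Finset.sum_const, smul_eq_mul, mul_one]
  have hdisj : (G.neighborFinset v : Set V).PairwiseDisjoint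
      (fun u => (G.neighborFinset u).erase v) := by
    intro u hu u' hu' huu'
    simp only [Finset.coe_sort_coe, Finset.mem_coe, G.mem_neighborFinset] at hu hu'
    simp only [Function.onFun]
    rw [Finset.disjoint_left]
    intro w hw hw'
    rw [Finset.mem_erase, G.mem_neighborFinset] at hw hw'
    exact tree_no_two hG hu hw.2 hu' hw'.2 huu' hw.1
  rw [← Finset.card_biUnion hdisj]
  have hsub : (G.neighborFinset v).biUnion (fun u => (G.neighborFinset u).erase v)
      ⊆ univ \ insert v (G.neighborFinset v) := by
    intro w hw
    rw [Finset.mem_biUnion] at hw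
    obtain ⟨u, hu, hw⟩ := hw
    rw [G.mem_neighborFinset] at hu
    rw [Finset.mem_erase, G.mem_neighborFinset] at hw
    rw [Finset.mem_sdiff, Finset.mem_insert]
    refine ⟨Finset.mem_univ _, ?_⟩
    rintro (rfl | hwv)
    · exact hw.1 rfl
    · rw [G.mem_neighborFinset] at hwv
      exact tree_no_tri hG hu hw.2 hwv
  have hcard := Finset.card_le_card hsub
  have h2 : (univ \ insert v (G.neighborFinset v)).card
      = Fintype.card V - (G.degree v + 1) := by
    rw [Finset.card_sdiff_of_subset (Finset.subset_univ _), Finset.card_insert_of_notMem (by simp),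
      Finset.card_univ, G.card_neighborFinset_eq_degree, add_comm]
  have h3 : G.degree v + 1 ≤ Fintype.card V := by
    have h4 : (insert v (G.neighborFinset v)).card ≤ Fintype.card V := by
      rw [← Finset.card_univ]
      exact Finset.card_le_card (Finset.subset_univ _)
    rw [Finset.card_insert_of_notMem (by simp), G.card_neighborFinset_eq_degree] at h4
    omega
  have := G.card_neighborFinset_eq_degree v
  omega

lemma degree_pos_of_connected (hG : G.Connected) (hn : 2 ≤ Fintype.card V) (v : V) :
    0 < G.degree v := by
  rw [G.degree_pos_iff_exists_adj]
  obtain ⟨u, hu⟩ := Fintype.exists_ne_of_one_lt_card (by omega) v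
  obtain ⟨p⟩ := hG.preconnected v u
  cases p with
  | nil => exact absurd rfl hu.symm
  | cons h q => exact ⟨_, h⟩

end Helpers

set_option maxHeartbeats 1000000 in
theorem tree_randic_ge_sqrt {V : Type*} [Fintype V] (G : SimpleGraph V)
    (hG : G.IsTree) (hn : 3 ≤ Fintype.card V) :
    Real.sqrt ((Fintype.card V : ℝ) - 1) ≤ randic G ∧
    (randic G = Real.sqrt ((Fintype.card V : ℝ) - 1) →
      ∃ v : V, ∀ u : V, u ≠ v → G.Adj v u) := by
  classical
  set n := Fintype.card V with hn_def
  have hdeg : ∀ v : V, 0 < G.degree v :=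
    degree_pos_of_connected hG.isConnected (by omega)
  set m : ℝ := (n : ℝ) - 1 with hm_def
  have hmpos : (0 : ℝ) < m := by
    have : (3 : ℝ) ≤ (n : ℝ) := by exact_mod_cast hn
    simp only [hm_def]; linarith
  have hcard : G.edgeFinset.card = n - 1 := by
    have := hG.card_edgeFinset; omega
  have hcast : ((n - 1 : ℕ) : ℝ) = m := by
    have h1 : 1 ≤ n := by omega
    push_cast [h1]; rfl
  -- the three edge sums
  set S : ℝ := ∑ e ∈ G.edgeFinset,
    Sym2.lift ⟨fun u v => Real.sqrt ((G.degree u : ℝ) * (G.degree v : ℝ)),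
      fun u v => by simp [mul_comm]⟩ e with hS_def
  set P : ℝ := ∑ e ∈ G.edgeFinset,
    Sym2.lift ⟨fun u v => ((G.degree u : ℝ) * (G.degree v : ℝ)),
      fun u v => by simp [mul_comm]⟩ e with hP_def
  have hone : ∑ _e ∈ G.edgeFinset, (1 : ℝ) = m := by
    rw [Finset.sum_const, hcard, nsmul_eq_mul, mul_one, hcast]
  -- handshake
  have hdegsum : ∑ v : V, (G.degree v : ℝ) = 2 * m := by
    have h0 := G.sum_degrees_eq_twice_card_edges
    have h2 : ∑ v : V, (G.degree v : ℝ) = 2 * (G.edgeFinset.card : ℝ) := by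
      exact_mod_cast h0
    rw [h2, hcard, hcast]
  -- neighbor sums bounded, real version
  have hnbr : ∀ v : V, ∑ u ∈ G.neighborFinset v, (G.degree u : ℝ) ≤ m := by
    intro v
    have := tree_neighbor_deg_sum hG v
    calc ∑ u ∈ G.neighborFinset v, (G.degree u : ℝ)
        = ((∑ u ∈ G.neighborFinset v, G.degree u : ℕ) : ℝ) := by push_cast; rfl
      _ ≤ ((n - 1 : ℕ) : ℝ) := by exact_mod_cast this
      _ = m := hcast
  -- 2*P as a vertex sum
  have hPsum : 2 * P = ∑ v : V, (G.degree v : ℝ) * ∑ u ∈ G.neighborFinset v, (G.degree u : ℝ) := by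
    rw [hP_def, edge_sum_eq G _ (fun u v => by simp [mul_comm])]
    refine Finset.sum_congr rfl fun v _ => ?_
    rw [Finset.mul_sum]
  have hPle : P ≤ m ^ 2 := by
    have h1 : 2 * P ≤ ∑ v : V, (G.degree v : ℝ) * m := by
      rw [hPsum]
      refine Finset.sum_le_sum fun v _ => ?_
      exact mul_le_mul_of_nonneg_left (hnbr v) (by positivity)
    have h2 : ∑ v : V, (G.degree v : ℝ) * m = 2 * m * m := by
      rw [← Finset.sum_mul, hdegsum]
    nlinarith
  -- pointwise facts
  have hx_eq : ∀ e ∈ G.edgeFinset,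
      (Sym2.lift ⟨fun u v => Real.sqrt ((G.degree u : ℝ) * (G.degree v : ℝ)),
        fun u v => by simp [mul_comm]⟩ e) ^ 2
      = 1 * Sym2.lift ⟨fun u v => ((G.degree u : ℝ) * (G.degree v : ℝ)),
        fun u v => by simp [mul_comm]⟩ e := by
    intro e he
    induction e using Sym2.ind with
    | _ u v =>
      simp only [Sym2.lift_mk, one_mul]
      exact Real.sq_sqrt (by positivity)
  have hx_one : ∀ e ∈ G.edgeFinset,
      (1 : ℝ) ^ 2 = (Sym2.lift ⟨fun u v => 1 / Real.sqrt ((G.degree u : ℝ) * (G.degree v : ℝ)),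
        fun u v => by simp [mul_comm]⟩ e)
      * Sym2.lift ⟨fun u v => Real.sqrt ((G.degree u : ℝ) * (G.degree v : ℝ)),
        fun u v => by simp [mul_comm]⟩ e := by
    intro e he
    induction e using Sym2.ind with
    | _ u v =>
      simp only [Sym2.lift_mk, one_pow]
      rw [one_div, inv_mul_cancel₀]
      have h1 := hdeg u
      have h2 := hdeg v
      have : (0:ℝ) < (G.degree u : ℝ) * (G.degree v : ℝ) := by positivity
      exact ne_of_gt (Real.sqrt_pos.mpr this)
  have hS_nonneg : 0 ≤ S := by
    rw [hS_def]
    refine Finset.sum_nonneg fun e he => ?_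
    induction e using Sym2.ind with
    | _ u v => simp only [Sym2.lift_mk]; positivity
  have hR_nonneg : 0 ≤ randic G := by
    unfold randic
    refine Finset.sum_nonneg fun e he => ?_
    induction e using Sym2.ind with
    | _ u v => simp only [Sym2.lift_mk]; positivity
  -- Cauchy-Schwarz 1 : S^2 ≤ m * P
  have hCS1 : S ^ 2 ≤ m * P := by
    have := Finset.sum_sq_le_sum_mul_sum_of_sq_eq_mul G.edgeFinset
      (r := fun e => Sym2.lift ⟨fun u v => Real.sqrt ((G.degree u : ℝ) * (G.degree v : ℝ)),
        fun u v => by simp [mul_comm]⟩ e)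
      (f := fun _ => (1:ℝ))
      (g := fun e => Sym2.lift ⟨fun u v => ((G.degree u : ℝ) * (G.degree v : ℝ)),
        fun u v => by simp [mul_comm]⟩ e)
      (fun i _ => zero_le_one)
      (fun e he => by
        induction e using Sym2.ind with
        | _ u v => simp only [Sym2.lift_mk]; positivity)
      hx_eq
    rwa [hone] at this
  -- Cauchy-Schwarz 2 : m^2 ≤ R * S
  have hCS2 : m ^ 2 ≤ randic G * S := by
    have := Finset.sum_sq_le_sum_mul_sum_of_sq_eq_mul G.edgeFinset
      (r := fun _ => (1:ℝ))
      (f := fun e => Sym2.lift ⟨fun u v => 1 / Real.sqrt ((G.degree u : ℝ) * (G.degree v : ℝ)),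
        fun u v => by simp [mul_comm]⟩ e)
      (g := fun e => Sym2.lift ⟨fun u v => Real.sqrt ((G.degree u : ℝ) * (G.degree v : ℝ)),
        fun u v => by simp [mul_comm]⟩ e)
      (fun e he => by
        induction e using Sym2.ind with
        | _ u v => simp only [Sym2.lift_mk]; positivity)
      (fun e he => by
        induction e using Sym2.ind with
        | _ u v => simp only [Sym2.lift_mk]; positivity)
      hx_one
    rwa [hone] at this
  have hsqm : Real.sqrt m > 0 := Real.sqrt_pos.mpr hmpos
  have hsqm2 : Real.sqrt m ^ 2 = m := Real.sq_sqrt hmpos.le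
  -- S ≤ m * sqrt m
  have hS_le : S ≤ m * Real.sqrt m := by
    have h1 : S ^ 2 ≤ (m * Real.sqrt m) ^ 2 := by
      calc S ^ 2 ≤ m * P := hCS1
        _ ≤ m * m ^ 2 := by nlinarith
        _ = (m * Real.sqrt m) ^ 2 := by rw [mul_pow, hsqm2]; ring
    have h2 := Real.sqrt_le_sqrt h1
    rwa [Real.sqrt_sq hS_nonneg, Real.sqrt_sq (by positivity)] at h2
  -- main inequality
  have hmain : Real.sqrt m ≤ randic G := by
    have key : Real.sqrt m * (m * Real.sqrt m) ≤ randic G * (m * Real.sqrt m) := by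
      have h1 : randic G * S ≤ randic G * (m * Real.sqrt m) :=
        mul_le_mul_of_nonneg_left hS_le hR_nonneg
      have h2 : Real.sqrt m * (m * Real.sqrt m) = m ^ 2 := by nlinarith [hsqm2]
      linarith
    exact le_of_mul_le_mul_right key (by positivity)
  refine ⟨hmain, fun heq0 => ?_⟩
  -- equality case
  have heq : randic G = Real.sqrt m := heq0
  have hSge : m * Real.sqrt m ≤ S := by
    have h1 : Real.sqrt m * (m * Real.sqrt m) ≤ Real.sqrt m * S := by
      have h2 : Real.sqrt m * (m * Real.sqrt m) = m ^ 2 := by nlinarith [hsqm2]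
      rw [heq] at hCS2
      linarith
    exact le_of_mul_le_mul_left h1 hsqm
  have hPge : m ^ 2 ≤ P := by
    have h1 : m * m ^ 2 ≤ m * P := by
      have h2 : (m * Real.sqrt m) ^ 2 ≤ S ^ 2 := by
        have := mul_self_le_mul_self (by positivity) hSge
        nlinarith
      have h3 : (m * Real.sqrt m) ^ 2 = m * m ^ 2 := by
        rw [mul_pow, hsqm2]; ring
      linarith
    exact le_of_mul_le_mul_left h1 hmpos
  have hPeq : P = m ^ 2 := le_antisymm hPle hPge
  -- per-vertex equality
  have hvert : ∀ v : V, ∑ u ∈ G.neighborFinset v, (G.degree u : ℝ) = m := by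
    have hzero : ∑ v : V, (G.degree v : ℝ) * (m - ∑ u ∈ G.neighborFinset v, (G.degree u : ℝ))
        = 0 := by
      have h1 : ∑ v : V, (G.degree v : ℝ) * (m - ∑ u ∈ G.neighborFinset v, (G.degree u : ℝ))
          = (∑ v : V, (G.degree v : ℝ)) * m - 2 * P := by
        rw [hPsum, Finset.sum_mul, ← Finset.sum_sub_distrib]
        refine Finset.sum_congr rfl fun v _ => ?_
        ring
      rw [h1, hdegsum, hPeq]
      ring
    have hnn : ∀ v ∈ (univ : Finset V),
        0 ≤ (G.degree v : ℝ) * (m - ∑ u ∈ G.neighborFinset v, (G.degree u : ℝ)) := by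
      intro v _
      have h3 : (0:ℝ) ≤ (G.degree v : ℝ) := by positivity
      have h4 := hnbr v
      nlinarith
    have hall := (Finset.sum_eq_zero_iff_of_nonneg hnn).mp hzero
    intro v
    have h2 := hall v (Finset.mem_univ v)
    have h3 : (0:ℝ) < (G.degree v : ℝ) := by exact_mod_cast hdeg v
    have h4 : m - ∑ u ∈ G.neighborFinset v, (G.degree u : ℝ) = 0 := by
      rcases mul_eq_zero.mp h2 with h | h
      · exact absurd h (ne_of_gt h3)
      · exact h
    linarith
  -- a leaf exists
  obtain ⟨u0, hu0⟩ : ∃ u0 : V, G.degree u0 = 1 := by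
    by_contra hcon
    push_neg at hcon
    have h2 : ∀ v ∈ (univ : Finset V), 2 ≤ G.degree v := by
      intro v _
      have := hdeg v
      have := hcon v
      omega
    have h3 := Finset.card_nsmul_le_sum univ (fun v => G.degree v) 2 h2
    rw [Finset.card_univ, smul_eq_mul] at h3
    have h4 := G.sum_degrees_eq_twice_card_edges
    rw [hcard] at h4
    omega
  obtain ⟨v0, hv0⟩ : ∃ v0 : V, G.neighborFinset u0 = {v0} := by
    refine Finset.card_eq_one.mp ?_
    rw [G.card_neighborFinset_eq_degree, hu0]
  have hdv0 : (G.degree v0 : ℝ) = m := by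
    have := hvert u0
    rwa [hv0, Finset.sum_singleton] at this
  have hdv0' : G.degree v0 = n - 1 := by
    have h1 : ((G.degree v0 : ℕ) : ℝ) = ((n - 1 : ℕ) : ℝ) := by rw [hcast, hdv0]
    exact_mod_cast h1
  refine ⟨v0, fun u hu => ?_⟩
  have hNeq : G.neighborFinset v0 = univ.erase v0 := by
    refine Finset.eq_of_subset_of_card_le (fun u hu' => ?_) ?_
    · rw [G.mem_neighborFinset] at hu'
      exact Finset.mem_erase.mpr ⟨hu'.ne', Finset.mem_univ _⟩
    · rw [Finset.card_erase_of_mem (Finset.mem_univ _), Finset.card_univ,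
        G.card_neighborFinset_eq_degree, hdv0']
  have : u ∈ G.neighborFinset v0 := by
    rw [hNeq]
    exact Finset.mem_erase.mpr ⟨hu, Finset.mem_univ _⟩
  rwa [G.mem_neighborFinset] at this
end

section
/- Let G be a nontrivial cactus (a cactus with no bridges) on n vertices with k cycles. Then R(G) ≥ (n - k - 1)/2 + √k, with equality for a bouquet of cycles (k cycles all sharing a single common vertex, all other vertices of degree 2). -/
open SimpleGraph Finset
open scoped Classical


lemma merge_ineq {a b : ℝ} (ha : 1 ≤ a) (hb : 1 ≤ b) :
    (a - Real.sqrt a) + (b - Real.sqrt b) ≤ (a + b - 1) - Real.sqrt (a + b - 1) := by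
  have ha0 : (0:ℝ) ≤ a := by linarith
  have hb0 : (0:ℝ) ≤ b := by linarith
  have hsa := Real.sq_sqrt ha0
  have hsb := Real.sq_sqrt hb0
  have hsa1 : 1 ≤ Real.sqrt a := by
    rw [show (1:ℝ) = Real.sqrt 1 by simp]; exact Real.sqrt_le_sqrt ha
  have hsb1 : 1 ≤ Real.sqrt b := by
    rw [show (1:ℝ) = Real.sqrt 1 by simp]; exact Real.sqrt_le_sqrt hb
  have key : Real.sqrt (a + b - 1) ≤ Real.sqrt a + Real.sqrt b - 1 := by
    have h1 : a + b - 1 ≤ (Real.sqrt a + Real.sqrt b - 1)^2 := by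
      nlinarith [mul_nonneg (sub_nonneg.mpr hsa1) (sub_nonneg.mpr hsb1)]
    calc Real.sqrt (a + b - 1) ≤ Real.sqrt ((Real.sqrt a + Real.sqrt b - 1)^2) :=
          Real.sqrt_le_sqrt h1
      _ = Real.sqrt a + Real.sqrt b - 1 := Real.sqrt_sq (by linarith)
  linarith

lemma merge_sum {ι : Type*} (s : Finset ι) (x : ι → ℝ) (hx : ∀ i ∈ s, 1 ≤ x i) :
    ∑ i ∈ s, (x i - Real.sqrt (x i)) ≤
      (1 + ∑ i ∈ s, (x i - 1)) - Real.sqrt (1 + ∑ i ∈ s, (x i - 1)) := by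
  induction s using Finset.cons_induction with
  | empty => simp
  | cons i t hi ih =>
    have hxi : 1 ≤ x i := hx i (Finset.mem_cons_self i t)
    have hxt : ∀ j ∈ t, 1 ≤ x j := fun j hj => hx j (Finset.mem_cons.mpr (Or.inr hj))
    have hS : (0:ℝ) ≤ ∑ j ∈ t, (x j - 1) :=
      Finset.sum_nonneg fun j hj => by linarith [hxt j hj]
    rw [Finset.sum_cons, Finset.sum_cons]
    have h1 : 1 ≤ 1 + ∑ j ∈ t, (x j - 1) := by linarith
    calc (x i - Real.sqrt (x i)) + ∑ j ∈ t, (x j - Real.sqrt (x j))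
        ≤ (x i - Real.sqrt (x i)) +
          ((1 + ∑ j ∈ t, (x j - 1)) - Real.sqrt (1 + ∑ j ∈ t, (x j - 1))) := by
          linarith [ih hxt]
      _ ≤ (x i + (1 + ∑ j ∈ t, (x j - 1)) - 1) -
            Real.sqrt (x i + (1 + ∑ j ∈ t, (x j - 1)) - 1) := merge_ineq hxi h1
      _ = (1 + ((x i - 1) + ∑ j ∈ t, (x j - 1))) -
            Real.sqrt (1 + ((x i - 1) + ∑ j ∈ t, (x j - 1))) := by
            rw [show x i + (1 + ∑ j ∈ t, (x j - 1)) - 1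
                  = 1 + ((x i - 1) + ∑ j ∈ t, (x j - 1)) by ring]

lemma edge_bound {a b : ℝ} (ha : 2 ≤ a) (hb : 2 ≤ b) :
    1 / Real.sqrt (2*a) + 1 / Real.sqrt (2*b) - 1/2 ≤ 1 / Real.sqrt (a * b) := by
  set x := Real.sqrt (a/2) with hxdef
  set y := Real.sqrt (b/2) with hydef
  have hx2 : x^2 = a/2 := Real.sq_sqrt (by linarith)
  have hy2 : y^2 = b/2 := Real.sq_sqrt (by linarith)
  have hx1 : 1 ≤ x := by
    rw [hxdef, show (1:ℝ) = Real.sqrt 1 by simp]; exact Real.sqrt_le_sqrt (by linarith)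
  have hy1 : 1 ≤ y := by
    rw [hydef, show (1:ℝ) = Real.sqrt 1 by simp]; exact Real.sqrt_le_sqrt (by linarith)
  have hx0 : 0 < x := by linarith
  have hy0 : 0 < y := by linarith
  have hab : Real.sqrt (a * b) = 2 * x * y := by
    rw [show a * b = (2*x*y)^2 by nlinarith]
    exact Real.sqrt_sq (by positivity)
  have h2a : Real.sqrt (2*a) = 2 * x := by
    rw [show 2*a = (2*x)^2 by nlinarith]
    exact Real.sqrt_sq (by positivity)
  have h2b : Real.sqrt (2*b) = 2 * y := by
    rw [show 2*b = (2*y)^2 by nlinarith]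
    exact Real.sqrt_sq (by positivity)
  rw [hab, h2a, h2b, ← sub_nonneg]
  have expand : 1/(2*x*y) - (1/(2*x) + 1/(2*y) - 1/2) = (x-1)*(y-1)/(2*x*y) := by
    field_simp; ring
  rw [expand]
  exact div_nonneg (mul_nonneg (by linarith) (by linarith)) (by positivity)


lemma sum_endpoints {V : Type*} [Fintype V] (G : SimpleGraph V) (f : V → ℝ) :
    ∑ e ∈ G.edgeFinset,
      Sym2.lift ⟨fun a b => f a + f b, fun a b => by simp [add_comm]⟩ e
    = ∑ v, (G.degree v : ℝ) * f v := by
  classical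
  have step : ∀ e ∈ G.edgeFinset,
      Sym2.lift ⟨fun a b => f a + f b, fun a b => by simp [add_comm]⟩ e
        = ∑ v, (if v ∈ e then f v else 0) := by
    intro e he
    induction e with
    | _ a b =>
      have hab : a ≠ b := by
        have := G.not_isDiag_of_mem_edgeSet (mem_edgeFinset.mp he)
        simpa [Sym2.isDiag_iff_proj_eq] using this
      rw [Sym2.lift_mk]
      have : ∑ v, (if v ∈ s(a, b) then f v else 0)
          = ∑ v ∈ ({a, b} : Finset V), f v := by
        rw [show (fun v => if v ∈ s(a, b) then f v else 0)
            = fun v => if v ∈ ({a, b} : Finset V) then f v else 0 from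
          funext fun v => by simp [Sym2.mem_iff]]
        rw [Finset.sum_ite_mem, Finset.univ_inter]
      rw [this, Finset.sum_pair hab]
  rw [Finset.sum_congr rfl step, Finset.sum_comm]
  refine Finset.sum_congr rfl fun v _ => ?_
  rw [← Finset.sum_filter]
  rw [show {e ∈ G.edgeFinset | v ∈ e} = G.incidenceFinset v from
    (G.incidenceFinset_eq_filter v).symm]
  rw [Finset.sum_const, card_incidenceFinset_eq_degree]
  simp [mul_comm]

lemma two_le_degree' {V : Type*} [Fintype V] (G : SimpleGraph V)
    (hconn : G.Connected) (hbr : ∀ e : Sym2 V, ¬ G.IsBridge e)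
    (hcard : 2 ≤ Fintype.card V) (v : V) : 2 ≤ G.degree v := by
  classical
  obtain ⟨u, hu⟩ := Fintype.exists_ne_of_one_lt_card (by omega) v
  have h1 : 0 < G.degree v := by
    rw [G.degree_pos_iff_exists_adj]
    obtain ⟨p⟩ := hconn.preconnected v u
    cases p with
    | nil => exact absurd rfl hu
    | cons h _ => exact ⟨_, h⟩
  by_contra hlt
  push_neg at hlt
  have hdeg : (G.neighborFinset v).card = 1 := by
    rw [card_neighborFinset_eq_degree]; omega
  obtain ⟨w, hw⟩ := Finset.card_eq_one.mp hdeg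
  have hadj : G.Adj v w := by
    rw [← mem_neighborFinset, hw]; exact Finset.mem_singleton_self w
  apply hbr s(v, w)
  rw [isBridge_iff]
  rintro ⟨p⟩
  have hnil : ¬ p.Nil := SimpleGraph.Walk.not_nil_of_ne (G.ne_of_adj hadj)
  have hadj1 := SimpleGraph.Walk.adj_snd hnil
  rw [deleteEdges_adj] at hadj1
  obtain ⟨hG', hne⟩ := hadj1
  have hmem : p.snd ∈ G.neighborFinset v := (G.mem_neighborFinset v _).mpr hG'
  rw [hw, Finset.mem_singleton] at hmem
  rw [hmem] at hG' hne
  exact hne (Set.mem_singleton _)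
set_option maxHeartbeats 1600000 in
theorem nontrivial_cactus_randic_min {V : Type*} [Fintype V] (G : SimpleGraph V)
    (hG : IsCactus G) (hbridgeless : ∀ e : Sym2 V, ¬ G.IsBridge e)
    (k : ℕ) (hk : G.edgeFinset.card + 1 = Fintype.card V + k) :
    randic G ≥ ((Fintype.card V : ℝ) - k - 1) / 2 + Real.sqrt k ∧
    ((∃ v : V, ∀ u : V, u ≠ v → G.degree u = 2) →
      randic G = ((Fintype.card V : ℝ) - k - 1) / 2 + Real.sqrt k) := by
  classical
  have hconn := hG.1
  have hnev : Nonempty V := hconn.nonempty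
  have hnpos : 0 < Fintype.card V := Fintype.card_pos
  by_cases hm0 : G.edgeFinset.card = 0
  · have hn1 : Fintype.card V = 1 := by omega
    have hk0 : k = 0 := by omega
    have hrand : randic G = 0 := by
      unfold randic
      rw [Finset.card_eq_zero.mp hm0, Finset.sum_empty]
    rw [hrand, hn1, hk0]
    norm_num
  · -- main case : at least one edge
    have hn2 : 2 ≤ Fintype.card V := by
      obtain ⟨e, he⟩ := Finset.card_pos.mp (Nat.pos_of_ne_zero hm0)
      have hab : ∀ e' ∈ G.edgeFinset, ∃ a b : V, a ≠ b := by
        intro e'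
        induction e' with
        | _ a b =>
          intro he'
          exact ⟨a, b, by simpa using G.not_isDiag_of_mem_edgeSet (mem_edgeFinset.mp he')⟩
      exact Fintype.one_lt_card_iff.mpr (hab e he)
    have hdeg2 : ∀ v, 2 ≤ G.degree v := two_le_degree' G hconn hbridgeless hn2
    have hsumdeg : ∑ v, G.degree v = 2 * G.edgeFinset.card :=
      G.sum_degrees_eq_twice_card_edges
    have hk1 : 1 ≤ k := by
      have h2n : 2 * Fintype.card V ≤ ∑ v, G.degree v := by
        calc 2 * Fintype.card V = ∑ _v : V, 2 := by
              rw [Finset.sum_const, card_univ, smul_eq_mul, mul_comm]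
          _ ≤ ∑ v, G.degree v := Finset.sum_le_sum fun v _ => hdeg2 v
      omega
    have hmr : (G.edgeFinset.card : ℝ) = (Fintype.card V : ℝ) + k - 1 := by
      have := congrArg (fun x : ℕ => (x : ℝ)) hk
      push_cast at this
      linarith
    have hkpos : (0:ℝ) < k := by exact_mod_cast hk1
    have hsk : Real.sqrt k * Real.sqrt k = (k:ℝ) := Real.mul_self_sqrt (by positivity)
    have hskpos : 0 < Real.sqrt k := Real.sqrt_pos.mpr hkpos
    constructor
    · -- the inequality
      have key : ∀ e ∈ G.edgeFinset,
          1/2 - Sym2.lift ⟨fun a b =>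
              (1/2 - 1/Real.sqrt (2 * (G.degree a : ℝ)))
              + (1/2 - 1/Real.sqrt (2 * (G.degree b : ℝ))),
            fun a b => by simp [add_comm]⟩ e
          ≤ Sym2.lift ⟨fun u v => 1 / Real.sqrt ((G.degree u : ℝ) * (G.degree v : ℝ)),
              fun u v => by simp [mul_comm]⟩ e := by
        intro e he
        induction e with
        | _ a b =>
          rw [Sym2.lift_mk, Sym2.lift_mk]
          have h2a : (2:ℝ) ≤ (G.degree a : ℝ) := by exact_mod_cast hdeg2 a
          have h2b : (2:ℝ) ≤ (G.degree b : ℝ) := by exact_mod_cast hdeg2 b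
          have := edge_bound h2a h2b
          linarith
      have h1 : ∑ e ∈ G.edgeFinset,
          (1/2 - Sym2.lift ⟨fun a b =>
              (1/2 - 1/Real.sqrt (2 * (G.degree a : ℝ)))
              + (1/2 - 1/Real.sqrt (2 * (G.degree b : ℝ))),
            fun a b => by simp [add_comm]⟩ e)
          ≤ randic G := by
        unfold randic
        exact Finset.sum_le_sum key
      have h2 : ∑ e ∈ G.edgeFinset,
          (1/2 - Sym2.lift ⟨fun a b =>
              (1/2 - 1/Real.sqrt (2 * (G.degree a : ℝ)))
              + (1/2 - 1/Real.sqrt (2 * (G.degree b : ℝ))),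
            fun a b => by simp [add_comm]⟩ e)
          = (G.edgeFinset.card : ℝ)/2
            - ∑ v, (G.degree v : ℝ) * (1/2 - 1/Real.sqrt (2 * (G.degree v : ℝ))) := by
        rw [Finset.sum_sub_distrib, Finset.sum_const,
          sum_endpoints G (fun u => 1/2 - 1/Real.sqrt (2 * (G.degree u : ℝ)))]
        rw [nsmul_eq_mul]
        ring
      have hvert : ∀ v : V, (G.degree v : ℝ) * (1/2 - 1/Real.sqrt (2 * (G.degree v : ℝ)))
          = (G.degree v : ℝ)/2 - Real.sqrt ((G.degree v : ℝ)/2) := by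
        intro v
        have hd : (2:ℝ) ≤ (G.degree v : ℝ) := by exact_mod_cast hdeg2 v
        set d := (G.degree v : ℝ) with hdd
        set x := Real.sqrt (d/2) with hx
        have hx2 : x^2 = d/2 := Real.sq_sqrt (by linarith)
        have hx0 : 0 < x := by
          rw [hx]; exact Real.sqrt_pos.mpr (by linarith)
        have h2d : Real.sqrt (2*d) = 2 * x := by
          rw [show 2*d = (2*x)^2 by nlinarith]
          exact Real.sqrt_sq (by positivity)
        rw [h2d]
        field_simp
        nlinarith
      have hmerge : ∑ v, ((G.degree v : ℝ)/2 - Real.sqrt ((G.degree v : ℝ)/2))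
          ≤ (k:ℝ) - Real.sqrt k := by
        have happ := merge_sum Finset.univ (fun v => (G.degree v : ℝ)/2)
          (fun v _ => by
            have : (2:ℝ) ≤ (G.degree v : ℝ) := by exact_mod_cast hdeg2 v
            linarith)
        have hS : (1 + ∑ v, ((G.degree v : ℝ)/2 - 1)) = (k:ℝ) := by
          rw [Finset.sum_sub_distrib, Finset.sum_const, card_univ, nsmul_eq_mul, mul_one]
          have hsd : ∑ v, ((G.degree v : ℝ)/2) = (G.edgeFinset.card : ℝ) := by
            rw [← Finset.sum_div]
            have : (∑ v, (G.degree v : ℝ)) = 2 * (G.edgeFinset.card : ℝ) := by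
              exact_mod_cast congrArg (fun x : ℕ => (x : ℝ)) hsumdeg
            rw [this]; ring
          rw [hsd]
          linarith [hmr]
        rw [hS] at happ
        exact happ
      have hfinal : (G.edgeFinset.card : ℝ)/2 - ((k:ℝ) - Real.sqrt k)
          = ((Fintype.card V : ℝ) - k - 1)/2 + Real.sqrt k := by
        rw [hmr]; ring
      rw [ge_iff_le, ← hfinal]
      calc (G.edgeFinset.card : ℝ)/2 - ((k:ℝ) - Real.sqrt k)
          ≤ (G.edgeFinset.card : ℝ)/2
            - ∑ v, (G.degree v : ℝ) * (1/2 - 1/Real.sqrt (2 * (G.degree v : ℝ))) := by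
            have : ∑ v, (G.degree v : ℝ) * (1/2 - 1/Real.sqrt (2 * (G.degree v : ℝ)))
                ≤ (k:ℝ) - Real.sqrt k := by
              rw [Finset.sum_congr rfl (fun v _ => hvert v)]
              exact hmerge
            linarith
        _ ≤ randic G := by rw [← h2]; exact h1
    · -- the equality case
      rintro ⟨v, hv⟩
      have hdv : G.degree v = 2 * k := by
        have hsplit : ∑ u, G.degree u = G.degree v + ∑ u ∈ univ.erase v, G.degree u :=
          (Finset.add_sum_erase univ _ (mem_univ v)).symm
        have herase : ∑ u ∈ univ.erase v, G.degree u = 2 * (Fintype.card V - 1) := by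
          rw [Finset.sum_congr rfl (fun u hu => hv u (Finset.mem_erase.mp hu).1)]
          rw [Finset.sum_const, Finset.card_erase_of_mem (mem_univ v), card_univ,
            smul_eq_mul, mul_comm]
        omega
      unfold randic
      rw [← Finset.sum_filter_add_sum_filter_not G.edgeFinset (fun e => v ∈ e)]
      have hfilt : G.edgeFinset.filter (fun e => v ∈ e) = G.incidenceFinset v :=
        (G.incidenceFinset_eq_filter v).symm
      have hc1 : (G.edgeFinset.filter (fun e => v ∈ e)).card = 2 * k := by
        rw [hfilt, card_incidenceFinset_eq_degree]; exact hdv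
      have h2km : 2 * k ≤ G.edgeFinset.card := by
        rw [← hc1]; exact Finset.card_filter_le _ _
      have hc2 : (G.edgeFinset.filter (fun e => ¬ v ∈ e)).card
          = G.edgeFinset.card - 2 * k := by
        have := Finset.card_filter_add_card_filter_not
          (s := G.edgeFinset) (p := fun e => v ∈ e)
        omega
      have h4k : ∀ x y : ℝ, x = 2*(k:ℝ) → y = 2 → Real.sqrt (x * y) = 2 * Real.sqrt k := by
        intro x y hx hy
        rw [hx, hy, show 2*(k:ℝ)*2 = (2*Real.sqrt k)^2 by nlinarith]
        exact Real.sqrt_sq (by positivity)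
      have hs1 : ∑ e ∈ G.edgeFinset.filter (fun e => v ∈ e),
          Sym2.lift ⟨fun u w => 1 / Real.sqrt ((G.degree u : ℝ) * (G.degree w : ℝ)),
            fun u w => by simp [mul_comm]⟩ e = Real.sqrt k := by
        have hval : ∀ e ∈ G.edgeFinset.filter (fun e => v ∈ e),
            Sym2.lift ⟨fun u w => 1 / Real.sqrt ((G.degree u : ℝ) * (G.degree w : ℝ)),
              fun u w => by simp [mul_comm]⟩ e = 1/(2*Real.sqrt k) := by
          intro e he'
          rw [Finset.mem_filter] at he'
          obtain ⟨he, hve⟩ := he'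
          induction e with
          | _ a b =>
            rw [Sym2.lift_mk]
            have hab : a ≠ b := by
              have := G.not_isDiag_of_mem_edgeSet (mem_edgeFinset.mp he)
              simpa using this
            rcases Sym2.mem_iff.mp hve with rfl | rfl
            · have hb : G.degree b = 2 := hv b (fun hbv => hab hbv.symm)
              show 1 / Real.sqrt ((G.degree v : ℝ) * (G.degree b : ℝ)) = 1/(2*Real.sqrt k)
              rw [h4k ((G.degree v : ℝ)) ((G.degree b : ℝ))
                (by exact_mod_cast hdv) (by exact_mod_cast hb)]
            · have ha : G.degree a = 2 := hv a hab
              show 1 / Real.sqrt ((G.degree a : ℝ) * (G.degree v : ℝ)) = 1/(2*Real.sqrt k)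
              rw [mul_comm ((G.degree a : ℝ)) ((G.degree v : ℝ)),
                h4k ((G.degree v : ℝ)) ((G.degree a : ℝ))
                  (by exact_mod_cast hdv) (by exact_mod_cast ha)]
        rw [Finset.sum_congr rfl hval, Finset.sum_const, hc1, nsmul_eq_mul]
        push_cast
        field_simp
        nlinarith
      have hs2 : ∑ e ∈ G.edgeFinset.filter (fun e => ¬ v ∈ e),
          Sym2.lift ⟨fun u w => 1 / Real.sqrt ((G.degree u : ℝ) * (G.degree w : ℝ)),
            fun u w => by simp [mul_comm]⟩ e
          = ((G.edgeFinset.card : ℝ) - 2*k) * (1/2) := by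
        have hval : ∀ e ∈ G.edgeFinset.filter (fun e => ¬ v ∈ e),
            Sym2.lift ⟨fun u w => 1 / Real.sqrt ((G.degree u : ℝ) * (G.degree w : ℝ)),
              fun u w => by simp [mul_comm]⟩ e = 1/2 := by
          intro e he'
          rw [Finset.mem_filter] at he'
          obtain ⟨he, hve⟩ := he'
          induction e with
          | _ a b =>
            rw [Sym2.lift_mk]
            have hav : a ≠ v := fun h => hve (by rw [h]; exact Sym2.mem_mk_left v b)
            have hbv : b ≠ v := fun h => hve (by rw [h]; exact Sym2.mem_mk_right a v)
            have ha : G.degree a = 2 := hv a hav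
            have hb : G.degree b = 2 := hv b hbv
            show 1 / Real.sqrt ((G.degree a : ℝ) * (G.degree b : ℝ)) = 1/2
            rw [ha, hb]
            rw [show ((2:ℕ):ℝ) * ((2:ℕ):ℝ) = 4 by norm_num]
            rw [show Real.sqrt 4 = 2 by
              rw [show (4:ℝ) = 2^2 by norm_num]; exact Real.sqrt_sq (by norm_num)]
        rw [Finset.sum_congr rfl hval, Finset.sum_const, hc2, nsmul_eq_mul]
        rw [Nat.cast_sub h2km]
        push_cast
        ring
      rw [hs1, hs2, hmr]
      ring
end
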